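/- arXiv:1401.5774 — 6 statements merged into one kernel-verified Lean document; each statement's English description precedes it below -/
import Mathlib

section
/- If a Γ-lattice L is quasi-permutation and L' is a Γ-lattice equivalent to L, then L' is quasi-permutation. -/
universe u

structure GLat (Γ : Type u) [Group Γ] : Type (u+1) where
  carrier : Type u
  [acg : AddCommGroup carrier]
  [act : DistribMulAction Γ carrier]
  [free : Module.Free ℤ carrier]
  [fin : Module.Finite ℤ carrier]

attribute [instance] GLat.acg GLat.act GLat.free GLat.fin

instance {Γ : Type u} [Group Γ] : CoeSort (GLat Γ) (Type u) := ⟨GLat.carrier⟩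

namespace GLat

variable {Γ : Type u} [Group Γ]

/-- A Γ-equivariant additive map. -/
def Equivariant {L M : GLat Γ} (f : L →+ M) : Prop :=
  ∀ (γ : Γ) (x : L), f (γ • x) = γ • f x

/-- A permutation Γ-lattice: it has a ℤ-basis permuted by Γ. -/
def IsPermutation (P : GLat Γ) : Prop :=
  ∃ (ι : Type u) (b : Module.Basis ι ℤ P.carrier),
    ∀ γ : Γ, ∃ σ : Equiv.Perm ι, ∀ i, γ • b i = b (σ i)

/-- Short exactness of `0 → L → M → N → 0`. -/
def SES {L M N : GLat Γ} (f : L →+ M) (g : M →+ N) : Prop :=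
  Function.Injective f ∧ Function.Surjective g ∧ g.ker = f.range

/-- Quasi-permutation lattice: fits in `0 → L → P → P' → 0` with `P, P'` permutation. -/
def IsQuasiPermutation (L : GLat Γ) : Prop :=
  ∃ (P P' : GLat Γ) (f : L →+ P) (g : P →+ P'),
    IsPermutation P ∧ IsPermutation P' ∧ Equivariant f ∧ Equivariant g ∧ SES f g

/-- Colliot-Thélène–Sansuc equivalence of Γ-lattices. -/
def LatEquiv (L L' : GLat Γ) : Prop :=
  ∃ (E P P' : GLat Γ) (f : L →+ E) (g : E →+ P)
    (f' : L' →+ E) (g' : E →+ P'),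
    IsPermutation P ∧ IsPermutation P' ∧
    Equivariant f ∧ Equivariant g ∧ Equivariant f' ∧ Equivariant g' ∧
    SES f g ∧ SES f' g'

/-- The zero lattice. -/
def zero : GLat Γ := { carrier := PUnit }

/-- Direct sum of two Γ-lattices. -/
def prod (L M : GLat Γ) : GLat Γ := { carrier := L × M }

/-- Quasi-invertible: a direct summand of a quasi-permutation lattice. -/
def IsQuasiInvertible (L : GLat Γ) : Prop :=
  ∃ M : GLat Γ, IsQuasiPermutation (L.prod M)

end GLat

namespace QPAux

variable {Γ : Type u} [Group Γ]

section QuotMod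

variable {Y Z : Type u} [AddCommGroup Y] [AddCommGroup Z]
  [DistribMulAction Γ Y] [DistribMulAction Γ Z]

/-- Quotient of a Γ-module by the range of an equivariant hom. -/
def QuotMod (k : Y →+ Z) (_hk : ∀ (γ : Γ) y, k (γ • y) = γ • k y) : Type u :=
  Z ⧸ k.range

variable (k : Y →+ Z) (hk : ∀ (γ : Γ) y, k (γ • y) = γ • k y)

instance : AddCommGroup (QuotMod k hk) :=
  inferInstanceAs (AddCommGroup (Z ⧸ k.range))

/-- The quotient map as an `AddMonoidHom`. -/
def QuotMod.mk : Z →+ QuotMod k hk := QuotientAddGroup.mk' k.range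

lemma QuotMod.mk_surjective : Function.Surjective (QuotMod.mk k hk) :=
  QuotientAddGroup.mk'_surjective _

lemma QuotMod.mk_eq_zero {z : Z} : QuotMod.mk k hk z = 0 ↔ z ∈ k.range :=
  QuotientAddGroup.eq_zero_iff z

noncomputable instance : DistribMulAction Γ (QuotMod k hk) where
  smul γ := QuotientAddGroup.map k.range k.range (DistribMulAction.toAddMonoidHom Z γ)
    (by rintro z ⟨y, rfl⟩; exact ⟨γ • y, hk γ y⟩)
  one_smul x := by
    refine QuotientAddGroup.induction_on x (fun z => ?_)
    show QuotientAddGroup.map _ _ _ _ _ = _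
    rw [QuotientAddGroup.map_mk]
    simp
  mul_smul γ δ x := by
    refine QuotientAddGroup.induction_on x (fun z => ?_)
    show QuotientAddGroup.map _ _ _ _ _ =
      QuotientAddGroup.map _ _ _ _ (QuotientAddGroup.map _ _ _ _ _)
    rw [QuotientAddGroup.map_mk, QuotientAddGroup.map_mk, QuotientAddGroup.map_mk]
    simp [mul_smul]
  smul_zero γ := map_zero (QuotientAddGroup.map k.range k.range
    (DistribMulAction.toAddMonoidHom Z γ) _)
  smul_add γ a b := map_add (QuotientAddGroup.map k.range k.range
    (DistribMulAction.toAddMonoidHom Z γ) _) a b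

lemma QuotMod.smul_mk (γ : Γ) (z : Z) :
    γ • (QuotMod.mk k hk z) = QuotMod.mk k hk (γ • z) :=
  QuotientAddGroup.map_mk' k.range k.range (DistribMulAction.toAddMonoidHom Z γ) _ z

/-- Lift a hom killing the range. -/
def QuotMod.lift {B : Type u} [AddCommGroup B] (φ : Z →+ B) (hφ : ∀ y, φ (k y) = 0) :
    QuotMod k hk →+ B :=
  QuotientAddGroup.lift k.range φ (by rintro z ⟨y, rfl⟩; exact hφ y)

@[simp] lemma QuotMod.lift_mk {B : Type u} [AddCommGroup B] (φ : Z →+ B)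
    (hφ : ∀ y, φ (k y) = 0) (z : Z) :
    QuotMod.lift k hk φ hφ (QuotMod.mk k hk z) = φ z := rfl

lemma QuotMod.lift_equivariant {B : Type u} [AddCommGroup B] [DistribMulAction Γ B]
    (φ : Z →+ B) (hφ : ∀ y, φ (k y) = 0) (hφe : ∀ (γ : Γ) z, φ (γ • z) = γ • φ z)
    (γ : Γ) (x : QuotMod k hk) :
    QuotMod.lift k hk φ hφ (γ • x) = γ • QuotMod.lift k hk φ hφ x := by
  refine QuotientAddGroup.induction_on x (fun z => ?_)
  have hz : (QuotientAddGroup.mk z : Z ⧸ k.range) = QuotMod.mk k hk z := rfl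
  rw [hz, QuotMod.smul_mk, QuotMod.lift_mk, QuotMod.lift_mk, hφe]

end QuotMod

/-- Descend an additive hom along a surjection that kills its kernel. -/
lemma exists_descend {E P W : Type u} [AddCommGroup E] [AddCommGroup P] [AddCommGroup W]
    (g : E →+ P) (hg : Function.Surjective g) (φ : E →+ W)
    (hker : ∀ e, g e = 0 → φ e = 0) :
    ∃ ψ : P →+ W, ∀ e, ψ (g e) = φ e := by
  have key : ∀ e e', g e = g e' → φ e = φ e' := by
    intro e e' hgε
    have h0 : φ (e - e') = 0 := hker _ (by rw [map_sub, hgε, sub_self])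
    rw [map_sub, sub_eq_zero] at h0
    exact h0
  refine ⟨AddMonoidHom.mk' (fun p => φ (Function.surjInv hg p)) (fun p q => ?_), fun e => ?_⟩
  · rw [← map_add]
    exact key _ _ (by simp only [map_add, Function.surjInv_eq hg])
  · exact key _ _ (Function.surjInv_eq hg _)

lemma symm_equivariant {A B : Type u} [AddCommGroup A] [AddCommGroup B]
    [DistribMulAction Γ A] [DistribMulAction Γ B] (e : A ≃+ B)
    (he : ∀ (γ : Γ) x, e (γ • x) = γ • e x) (γ : Γ) (y : B) :
    e.symm (γ • y) = γ • e.symm y := by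
  apply e.injective
  rw [e.apply_symm_apply, he, e.apply_symm_apply]

lemma basis_torsionfree {A : Type u} [AddCommGroup A] {κ : Type u} (b : Module.Basis κ ℤ A)
    {n : ℤ} (hn : n ≠ 0) (z : A) (h : n • z = 0) : z = 0 := by
  have h1 : n • b.repr z = 0 := by rw [← map_zsmul, h, map_zero]
  have h2 : b.repr z = 0 := by
    ext x
    have := DFunLike.congr_fun h1 x
    rw [Finsupp.smul_apply, smul_eq_mul, Finsupp.zero_apply] at this
    rcases mul_eq_zero.mp this with h | h
    · exact absurd h hn
    · simpa using h
  simpa using congrArg b.repr.symm h2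

lemma perm_basis_action {A : Type u} [AddCommGroup A] [DistribMulAction Γ A] {κ : Type u}
    (b : Module.Basis κ ℤ A) (hb : ∀ γ : Γ, ∃ σ : Equiv.Perm κ, ∀ x, γ • b x = b (σ x)) :
    ∃ a : Γ → κ ≃ κ, (∀ γ x, γ • b x = b (a γ x)) ∧
      (∀ γ δ x, a (γ * δ) x = a γ (a δ x)) := by
  classical
  choose σ hσ using hb
  have binj : Function.Injective b := b.injective
  have hmul : ∀ γ δ x, σ (γ * δ) x = σ γ (σ δ x) := by
    intro γ δ x
    apply binj
    rw [← hσ, ← hσ, ← hσ, mul_smul]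
  have hone : ∀ x, σ 1 x = x := by
    intro x
    apply binj
    rw [← hσ, one_smul]
  refine ⟨fun γ => ⟨σ γ, σ γ⁻¹, fun x => ?_, fun x => ?_⟩, fun γ x => hσ γ x, hmul⟩
  · rw [← hmul, inv_mul_cancel, hone]
  · rw [← hmul, mul_inv_cancel, hone]

lemma exists_equivariant_splitting [Fintype Γ] {A Z B : Type u}
    [AddCommGroup A] [AddCommGroup Z] [AddCommGroup B]
    [DistribMulAction Γ A] [DistribMulAction Γ Z] [DistribMulAction Γ B]
    {κ ι : Type u} [Fintype κ] (bA : Module.Basis κ ℤ A) (bB : Module.Basis ι ℤ B)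
    (hbA : ∀ γ : Γ, ∃ σ : Equiv.Perm κ, ∀ x, γ • bA x = bA (σ x))
    (hbB : ∀ γ : Γ, ∃ σ : Equiv.Perm ι, ∀ x, γ • bB x = bB (σ x))
    (f : A →+ Z) (g : Z →+ B)
    (hfe : ∀ (γ : Γ) x, f (γ • x) = γ • f x) (hge : ∀ (γ : Γ) x, g (γ • x) = γ • g x)
    (hinj : Function.Injective f) (hsurj : Function.Surjective g) (hex : g.ker = f.range) :
    ∃ e : A × B ≃+ Z, ∀ (γ : Γ) x, e (γ • x) = γ • e x := by
  classical
  obtain ⟨aA, haA, haAmul⟩ := perm_basis_action bA hbA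
  obtain ⟨aB, haB, haBmul⟩ := perm_basis_action bB hbB
  set n : ℤ := (Fintype.card Γ : ℤ) with hnn
  have hn : n ≠ 0 := by
    simp [hnn, Fintype.card_ne_zero]
  have hgf : ∀ a, g (f a) = 0 := by
    intro a
    have : f a ∈ g.ker := by rw [hex]; exact ⟨a, rfl⟩
    exact this
  have memrange : ∀ z, g z = 0 → ∃ a, f a = z := by
    intro z hz
    have : z ∈ g.ker := hz
    rw [hex] at this
    exact this
  have hsmulz : ∀ (γ : Γ) (c : ℤ) (z : Z), γ • (c • z) = c • (γ • z) := fun γ c z =>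
    map_zsmul (DistribMulAction.toAddMonoidHom Z γ) c z
  have hsmulA : ∀ (γ : Γ) (c : ℤ) (z : A), γ • (c • z) = c • (γ • z) := fun γ c z =>
    map_zsmul (DistribMulAction.toAddMonoidHom A γ) c z
  -- a ℤ-linear section
  set s₀lin : B →ₗ[ℤ] Z := bB.constr ℤ (fun i => Function.surjInv hsurj (bB i)) with hs₀lin
  set s₀ : B →+ Z := s₀lin.toAddMonoidHom with hs₀def
  have hgs₀ : ∀ p, g (s₀ p) = p := by
    have h0 : g.toIntLinearMap.comp s₀lin = LinearMap.id :=
      bB.ext fun i => by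
        simp [hs₀lin, Function.surjInv_eq hsurj]
    intro p
    simpa [hs₀def] using DFunLike.congr_fun h0 p
  -- averaged section
  set s₁ : B →+ Z := ∑ γ : Γ, ((DistribMulAction.toAddMonoidHom Z γ⁻¹).comp
      (s₀.comp (DistribMulAction.toAddMonoidHom B γ))) with hs₁def
  have hs₁ : ∀ p, s₁ p = ∑ γ : Γ, γ⁻¹ • s₀ (γ • p) := by
    intro p
    rw [hs₁def, AddMonoidHom.finset_sum_apply]
    rfl
  have hgs₁ : ∀ p, g (s₁ p) = n • p := by
    intro p
    rw [hs₁ p, map_sum]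
    have hterm : ∀ γ : Γ, g (γ⁻¹ • s₀ (γ • p)) = p := by
      intro γ
      rw [hge, hgs₀, inv_smul_smul]
    rw [Finset.sum_congr rfl (fun γ _ => hterm γ), Finset.sum_const, Finset.card_univ, hnn,
      natCast_zsmul]
  have hs₁e : ∀ (γ : Γ) p, s₁ (γ • p) = γ • s₁ p := by
    intro γ p
    rw [hs₁, hs₁, Finset.smul_sum]
    refine (Fintype.sum_equiv (Equiv.mulRight γ⁻¹)
      (fun δ => γ • (δ⁻¹ • s₀ (δ • p))) (fun δ => δ⁻¹ • s₀ (δ • (γ • p))) (fun δ => ?_)).symm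
    simp only [Equiv.coe_mulRight]
    rw [smul_smul, smul_smul, mul_inv_rev, inv_inv, inv_mul_cancel_right]
  have hmem : ∀ p, ∃ a : A, f a = s₁ p - n • s₀ p := by
    intro p
    apply memrange
    rw [map_sub, map_zsmul, hgs₁, hgs₀, sub_self]
  choose m0 hm0 using hmem
  set m : B →+ A := AddMonoidHom.mk' m0 (fun p q => hinj (by
    rw [map_add, hm0, hm0, hm0, map_add, map_add, smul_add]
    abel)) with hmdef
  have hm : ∀ p, f (m p) = s₁ p - n • s₀ p := fun p => hm0 p
  have hdiv : ∀ (γ : Γ) p, ∃ d, γ • m p - m (γ • p) = n • d := by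
    intro γ p
    obtain ⟨d, hdd⟩ := memrange (s₀ (γ • p) - γ • s₀ p)
      (by rw [map_sub, hgs₀, hge, hgs₀, sub_self])
    refine ⟨d, hinj ?_⟩
    have e2 : f (γ • m p - m (γ • p)) = n • (s₀ (γ • p) - γ • s₀ p) := by
      rw [map_sub, hfe, hm, hm, smul_sub, hsmulz, hs₁e, smul_sub]
      abel
    rw [e2, ← hdd]
    exact (map_zsmul f n d).symm
  -- coefficients
  set coeff : κ → ι → ℤ := fun x i => bA.repr (m (bB i)) x with hcoeff
  have hrepr : ∀ (γ : Γ) (x : κ) (z : A), bA.repr (γ • z) (aA γ x) = bA.repr z x := by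
    intro γ x
    set F : A →ₗ[ℤ] ℤ := (Finsupp.lapply (aA γ x)).comp
      (bA.repr.toLinearMap.comp (DistribMulAction.toAddMonoidHom A γ).toIntLinearMap) with hF
    set G : A →ₗ[ℤ] ℤ := (Finsupp.lapply x).comp bA.repr.toLinearMap with hG
    have hFG : F = G := by
      refine bA.ext fun y => ?_
      simp only [hF, hG, LinearMap.comp_apply, AddMonoidHom.coe_toIntLinearMap,
        DistribMulAction.toAddMonoidHom_apply, LinearEquiv.coe_toLinearMap, Finsupp.lapply_apply]
      rw [haA, Module.Basis.repr_self, Module.Basis.repr_self, Finsupp.single_apply, Finsupp.single_apply]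
      simp [Equiv.apply_eq_iff_eq]
    intro z
    have := DFunLike.congr_fun hFG z
    simpa [hF, hG] using this
  have hcong : ∀ (γ : Γ) (x : κ) (i : ι),
      ∃ dd : ℤ, coeff x i - coeff (aA γ x) (aB γ i) = n * dd := by
    intro γ x i
    obtain ⟨d, hd2⟩ := hdiv γ (bB i)
    rw [haB] at hd2
    refine ⟨bA.repr d (aA γ x), ?_⟩
    have := congrArg (fun z => bA.repr z (aA γ x)) hd2
    simpa [map_sub, map_zsmul, Finsupp.sub_apply, Finsupp.smul_apply, smul_eq_mul,
      hrepr γ x (m (bB i)), hcoeff] using this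
  -- the correction terms
  set m' : B →+ A := (bB.constr ℤ (fun i => ∑ x, (coeff x i / n) • bA x)).toAddMonoidHom
    with hm'def
  have hm'b : ∀ i, m' (bB i) = ∑ x, (coeff x i / n) • bA x := by
    intro i
    simp [hm'def, Module.Basis.constr_basis]
  set m'' : ι → A := fun i => ∑ x, (coeff x i % n) • bA x with hm''def
  have hsplit : ∀ i, m (bB i) = n • m' (bB i) + m'' i := by
    intro i
    conv_lhs => rw [← bA.sum_repr (m (bB i))]
    rw [hm'b, hm''def, Finset.smul_sum, ← Finset.sum_add_distrib]
    refine Finset.sum_congr rfl fun x _ => ?_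
    rw [smul_smul, ← add_smul, Int.mul_ediv_add_emod]
  have hfix : ∀ (γ : Γ) i, γ • m'' i = m'' (aB γ i) := by
    intro γ i
    rw [hm''def]
    rw [Finset.smul_sum]
    refine Fintype.sum_equiv (aA γ) _ _ fun x => ?_
    obtain ⟨dd, hdd⟩ := hcong γ x i
    have hmod : coeff x i % n = coeff (aA γ x) (aB γ i) % n :=
      Int.ModEq.symm (Int.modEq_iff_dvd.mpr ⟨dd, by linarith⟩)
    rw [hsmulA, haA, hmod]
  -- torsion-freeness
  have tfA := basis_torsionfree bA hn
  have tfB := basis_torsionfree bB hn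
  have tfZ : ∀ z : Z, n • z = 0 → z = 0 := by
    intro z hz
    have h1 : g z = 0 := tfB _ (by rw [← map_zsmul, hz, map_zero])
    obtain ⟨a, rfl⟩ := memrange _ h1
    have h2 : f (n • a) = 0 := by rw [map_zsmul, hz]
    have ha : a = 0 := tfA a (hinj (by rw [h2, map_zero]))
    rw [ha, map_zero]
  -- the equivariant section
  set s : B →+ Z := s₀ + f.comp m' with hsdef
  have hsapp : ∀ p, s p = s₀ p + f (m' p) := fun p => rfl
  have hgs : ∀ p, g (s p) = p := by
    intro p
    rw [hsapp, map_add, hgs₀, hgf, add_zero]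
  have hsb : ∀ (γ : Γ) i, s (bB (aB γ i)) = γ • s (bB i) := by
    intro γ i
    have e3 : s₁ (bB (aB γ i)) = γ • s₁ (bB i) := by rw [← haB, hs₁e]
    have h1 : f (γ • m (bB i) - m (bB (aB γ i))) =
        n • (s₀ (bB (aB γ i)) - γ • s₀ (bB i)) := by
      rw [map_sub, hfe, hm, hm, e3, smul_sub, hsmulz, smul_sub]
      abel
    have h2 : γ • m (bB i) - m (bB (aB γ i)) =
        n • (γ • m' (bB i) - m' (bB (aB γ i))) := by
      rw [hsplit i, hsplit (aB γ i), smul_add, hsmulA, hfix, smul_sub]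
      abel
    have h3 : n • (f (γ • m' (bB i) - m' (bB (aB γ i))) -
        (s₀ (bB (aB γ i)) - γ • s₀ (bB i))) = 0 := by
      rw [smul_sub, ← map_zsmul f, ← h2, h1, sub_self]
    have h4 := tfZ _ h3
    have goal' : (s₀ (bB (aB γ i)) + f (m' (bB (aB γ i)))) -
        γ • (s₀ (bB i) + f (m' (bB i))) = 0 := by
      have hrw : (s₀ (bB (aB γ i)) + f (m' (bB (aB γ i)))) -
          γ • (s₀ (bB i) + f (m' (bB i)))
          = -(f (γ • m' (bB i) - m' (bB (aB γ i))) - (s₀ (bB (aB γ i)) - γ • s₀ (bB i))) := by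
        rw [map_sub, hfe, smul_add]
        abel
      rw [hrw, h4, neg_zero]
    rw [hsapp, hsapp]
    exact sub_eq_zero.mp goal'
  have hse : ∀ (γ : Γ) p, s (γ • p) = γ • s p := by
    intro γ
    have heq : (s.comp (DistribMulAction.toAddMonoidHom B γ)).toIntLinearMap =
        ((DistribMulAction.toAddMonoidHom Z γ).comp s).toIntLinearMap := by
      refine bB.ext fun i => ?_
      simp only [AddMonoidHom.coe_toIntLinearMap, AddMonoidHom.coe_comp, Function.comp_apply,
        DistribMulAction.toAddMonoidHom_apply]
      rw [haB, hsb]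
    intro p
    have := DFunLike.congr_fun heq p
    simpa using this
  -- assemble the equivalence
  set Φ : A × B →+ Z := f.coprod s with hΦdef
  have hΦapp : ∀ x : A × B, Φ x = f x.1 + s x.2 := fun x => rfl
  have hbij : Function.Bijective Φ := by
    constructor
    · rw [injective_iff_map_eq_zero]
      intro x hx
      have hp : x.2 = 0 := by
        have := congrArg g hx
        rw [hΦapp, map_add, hgf, hgs, zero_add, map_zero] at this
        exact this
      have ha : x.1 = 0 := by
        apply hinj
        rw [map_zero]
        have hx2 := hx
        rw [hΦapp, hp, map_zero, add_zero] at hx2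
        exact hx2
      exact Prod.ext ha hp
    · intro z
      obtain ⟨a, ha⟩ := memrange (z - s (g z)) (by rw [map_sub, hgs, sub_self])
      refine ⟨(a, g z), ?_⟩
      rw [hΦapp]
      simp only
      rw [ha, sub_add_cancel]
  refine ⟨AddEquiv.ofBijective Φ hbij, fun γ x => ?_⟩
  show Φ (γ • x) = γ • Φ x
  obtain ⟨a, p⟩ := x
  rw [Prod.smul_mk, hΦapp, hΦapp]
  simp only
  rw [hfe, hse, smul_add]

lemma isPermutation_prod {L M : GLat Γ} (hL : L.IsPermutation) (hM : M.IsPermutation) :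
    (L.prod M).IsPermutation := by
  obtain ⟨ι, b, hb⟩ := hL
  obtain ⟨κ, c, hc⟩ := hM
  refine ⟨ι ⊕ κ, b.prod c, fun γ => ?_⟩
  obtain ⟨σ, hσ⟩ := hb γ
  obtain ⟨τ, hτ⟩ := hc γ
  refine ⟨Equiv.sumCongr σ τ, fun i => ?_⟩
  cases i with
  | inl i =>
      show γ • (b.prod c) (Sum.inl i) = (b.prod c) (Sum.inl (σ i))
      rw [Module.Basis.prod_apply, Module.Basis.prod_apply]
      show γ • ((b i, 0) : L × M) = _
      rw [Prod.smul_mk, smul_zero, hσ]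
      rfl
  | inr j =>
      show γ • (b.prod c) (Sum.inr j) = (b.prod c) (Sum.inr (τ j))
      rw [Module.Basis.prod_apply, Module.Basis.prod_apply]
      show γ • ((0, c j) : L × M) = _
      rw [Prod.smul_mk, smul_zero, hτ]
      rfl

end QPAux

/-- If L is quasi-permutation and L' is equivalent to L, then L' is quasi-permutation. -/
theorem quasiPermutation_of_latEquiv {Γ : Type u} [Group Γ] [Fintype Γ]
    (L L' : GLat Γ) (hL : L.IsQuasiPermutation) (h : L'.LatEquiv L) :
    L'.IsQuasiPermutation := by
  classical
  open QPAux in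
  obtain ⟨Q, Q', uu, vv, hQperm, hQ'perm, hue, hve, huinj, hvsurj, hvk⟩ := hL
  obtain ⟨E, P, P', f, g, f', g', hPperm, hP'perm, hfe, hge, hf'e, hg'e,
    ⟨hfinj, hgsurj, hgk⟩, ⟨hf'inj, hg'surj, hg'k⟩⟩ := h
  -- composites vanish
  have hgf : ∀ l, g (f l) = 0 := fun l => by
    have : f l ∈ g.ker := by rw [hgk]; exact ⟨l, rfl⟩
    exact this
  have hg'f' : ∀ l, g' (f' l) = 0 := fun l => by
    have : f' l ∈ g'.ker := by rw [hg'k]; exact ⟨l, rfl⟩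
    exact this
  have hvu : ∀ l, vv (uu l) = 0 := fun l => by
    have : uu l ∈ vv.ker := by rw [hvk]; exact ⟨l, rfl⟩
    exact this
  -- the pushout X = (E × Q) / L
  set k₀ : L.carrier →+ E.carrier × Q.carrier := f'.prod (-uu) with hk₀def
  have hk₀app : ∀ l, k₀ l = (f' l, -uu l) := fun l => rfl
  have hk₀e : ∀ (γ : Γ) l, k₀ (γ • l) = γ • k₀ l := by
    intro γ l
    rw [hk₀app, hk₀app, Prod.smul_mk, hf'e, hue, smul_neg]
  set X := QuotMod k₀ hk₀e with hXdef
  set mkX := QuotMod.mk k₀ hk₀e with hmkXdef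
  have hmkXe : ∀ (γ : Γ) z, mkX (γ • z) = γ • mkX z := fun γ z =>
    (QuotMod.smul_mk k₀ hk₀e γ z).symm
  have hmk_eq : ∀ z z' : E.carrier × Q.carrier, (z - z') ∈ k₀.range → mkX z = mkX z' := by
    intro z z' hz
    have : mkX z - mkX z' = 0 := by
      rw [← map_sub]
      exact (QuotMod.mk_eq_zero k₀ hk₀e).mpr hz
    exact sub_eq_zero.mp this
  set jE : E.carrier →+ X := mkX.comp (AddMonoidHom.inl E.carrier Q.carrier) with hjEdef
  set jQ : Q.carrier →+ X := mkX.comp (AddMonoidHom.inr E.carrier Q.carrier) with hjQdef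
  have hjEapp : ∀ e, jE e = mkX (e, 0) := fun e => rfl
  have hjQapp : ∀ q, jQ q = mkX (0, q) := fun q => rfl
  have hjEe : ∀ (γ : Γ) e, jE (γ • e) = γ • jE e := by
    intro γ e
    rw [hjEapp, hjEapp, ← hmkXe]
    congr 1
    rw [Prod.smul_mk, smul_zero]
  have hjQe : ∀ (γ : Γ) q, jQ (γ • q) = γ • jQ q := by
    intro γ q
    rw [hjQapp, hjQapp, ← hmkXe]
    congr 1
    rw [Prod.smul_mk, smul_zero]
  set pP' : X →+ P'.carrier := QuotMod.lift k₀ hk₀e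
    (g'.comp (AddMonoidHom.fst E.carrier Q.carrier))
    (fun l => by rw [hk₀app]; exact hg'f' l) with hpP'def
  set pQ' : X →+ Q'.carrier := QuotMod.lift k₀ hk₀e
    (vv.comp (AddMonoidHom.snd E.carrier Q.carrier))
    (fun l => by rw [hk₀app]; show vv (-uu l) = 0; rw [map_neg, hvu, neg_zero]) with hpQ'def
  have hpP'app : ∀ z, pP' (mkX z) = g' z.1 := fun z => rfl
  have hpQ'app : ∀ z, pQ' (mkX z) = vv z.2 := fun z => rfl
  have hpP'e : ∀ (γ : Γ) x, pP' (γ • x) = γ • pP' x :=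
    QuotMod.lift_equivariant k₀ hk₀e _ _ (fun γ z => by
      show g' (γ • z).1 = γ • g' z.1
      rw [Prod.smul_fst, hg'e])
  have hpQ'e : ∀ (γ : Γ) x, pQ' (γ • x) = γ • pQ' x :=
    QuotMod.lift_equivariant k₀ hk₀e _ _ (fun γ z => by
      show vv (γ • z).2 = γ • vv z.2
      rw [Prod.smul_snd, hve])
  -- SES(jQ, pP')
  have hjQinj : Function.Injective jQ := by
    rw [injective_iff_map_eq_zero]
    intro q hq
    rw [hjQapp] at hq
    obtain ⟨l, hl⟩ := (QuotMod.mk_eq_zero k₀ hk₀e).mp hq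
    rw [hk₀app] at hl
    have h1 : f' l = 0 := congrArg Prod.fst hl
    have h2 : -uu l = q := congrArg Prod.snd hl
    have hl0 : l = 0 := hf'inj (by rw [h1, map_zero])
    rw [← h2, hl0, map_zero, neg_zero]
  have hpP'surj : Function.Surjective pP' := by
    intro p'
    obtain ⟨e, he⟩ := hg'surj p'
    exact ⟨mkX (e, 0), by rw [hpP'app]; exact he⟩
  have hkerP' : pP'.ker = jQ.range := by
    ext x
    constructor
    · intro hx
      obtain ⟨z, rfl⟩ := QuotMod.mk_surjective k₀ hk₀e x
      have hx' : g' z.1 = 0 := hx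
      have : z.1 ∈ g'.ker := hx'
      rw [hg'k] at this
      obtain ⟨l, hl⟩ := this
      refine ⟨z.2 + uu l, ?_⟩
      rw [hjQapp]
      apply hmk_eq
      refine ⟨-l, ?_⟩
      rw [hk₀app, map_neg, map_neg, neg_neg]
      have : ((0 : E.carrier), z.2 + uu l) - z = (-f' l, uu l) := by
        rw [Prod.ext_iff]
        constructor
        · show 0 - z.1 = -f' l
          rw [hl, zero_sub]
        · show (z.2 + uu l) - z.2 = uu l
          abel
      rw [this]
    · rintro ⟨q, rfl⟩
      show pP' (jQ q) = 0
      rw [hjQapp, hpP'app]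
      exact map_zero g'
  -- SES(jE, pQ')
  have hjEinj : Function.Injective jE := by
    rw [injective_iff_map_eq_zero]
    intro e he
    rw [hjEapp] at he
    obtain ⟨l, hl⟩ := (QuotMod.mk_eq_zero k₀ hk₀e).mp he
    rw [hk₀app] at hl
    have h1 : f' l = e := congrArg Prod.fst hl
    have h2 : -uu l = 0 := congrArg Prod.snd hl
    have hl0 : l = 0 := huinj (by rw [map_zero]; exact neg_eq_zero.mp h2)
    rw [← h1, hl0, map_zero]
  have hpQ'surj : Function.Surjective pQ' := by
    intro q'
    obtain ⟨q, hq⟩ := hvsurj q'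
    exact ⟨mkX (0, q), by rw [hpQ'app]; exact hq⟩
  have hkerQ' : pQ'.ker = jE.range := by
    ext x
    constructor
    · intro hx
      obtain ⟨z, rfl⟩ := QuotMod.mk_surjective k₀ hk₀e x
      have hx' : vv z.2 = 0 := hx
      have : z.2 ∈ vv.ker := hx'
      rw [hvk] at this
      obtain ⟨l, hl⟩ := this
      refine ⟨z.1 + f' l, ?_⟩
      rw [hjEapp]
      apply hmk_eq
      refine ⟨l, ?_⟩
      have : ((z.1 + f' l : E.carrier), (0 : Q.carrier)) - z = (f' l, -uu l) := by
        rw [Prod.ext_iff]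
        constructor
        · show (z.1 + f' l) - z.1 = f' l
          abel
        · show 0 - z.2 = -uu l
          rw [hl, zero_sub]
      rw [hk₀app, this]
    · rintro ⟨e, rfl⟩
      show pQ' (jE e) = 0
      rw [hjEapp, hpQ'app]
      exact map_zero vv
  -- first splitting : X ≃ Q × P'
  obtain ⟨κQ, bQ, hbQ⟩ := id hQperm
  obtain ⟨ιP', bP', hbP'⟩ := id hP'perm
  haveI : Finite κQ := Module.Finite.finite_basis bQ
  haveI : Fintype κQ := Fintype.ofFinite κQ
  obtain ⟨e₁, he₁⟩ := exists_equivariant_splitting bQ bP' hbQ hbP' jQ pP'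
    hjQe hpP'e hjQinj hpP'surj hkerP'
  have he₁s := symm_equivariant e₁ he₁
  -- transport along e₁ : SES (f₂, g₂) with middle Q × P'
  set f₂ : E.carrier →+ Q.carrier × P'.carrier := e₁.symm.toAddMonoidHom.comp jE with hf₂def
  set g₂ : (Q.carrier × P'.carrier) →+ Q'.carrier := pQ'.comp e₁.toAddMonoidHom with hg₂def
  have hf₂app : ∀ e, f₂ e = e₁.symm (jE e) := fun e => rfl
  have hg₂app : ∀ r, g₂ r = pQ' (e₁ r) := fun r => rfl
  have hf₂e : ∀ (γ : Γ) e, f₂ (γ • e) = γ • f₂ e := by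
    intro γ e
    rw [hf₂app, hf₂app, hjEe, he₁s]
  have hg₂e : ∀ (γ : Γ) r, g₂ (γ • r) = γ • g₂ r := by
    intro γ r
    rw [hg₂app, hg₂app, he₁, hpQ'e]
  have hf₂inj : Function.Injective f₂ := fun a b hab =>
    hjEinj (e₁.symm.injective hab)
  have hg₂surj : Function.Surjective g₂ := fun q' => by
    obtain ⟨x, hx⟩ := hpQ'surj q'
    exact ⟨e₁.symm x, by rw [hg₂app, e₁.apply_symm_apply]; exact hx⟩
  have hker₂ : g₂.ker = f₂.range := by
    ext r
    constructor
    · intro hr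
      have : e₁ r ∈ pQ'.ker := hr
      rw [hkerQ'] at this
      obtain ⟨e, he⟩ := this
      exact ⟨e, by rw [hf₂app, he, e₁.symm_apply_apply]⟩
    · rintro ⟨e, rfl⟩
      show g₂ (f₂ e) = 0
      rw [hg₂app, hf₂app, e₁.apply_symm_apply]
      have : jE e ∈ pQ'.ker := by rw [hkerQ']; exact ⟨e, rfl⟩
      exact this
  have hg₂f₂ : ∀ e, g₂ (f₂ e) = 0 := fun e => by
    have : f₂ e ∈ g₂.ker := by rw [hker₂]; exact ⟨e, rfl⟩
    exact this
  -- the final quotient W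
  set f₃ : L'.carrier →+ Q.carrier × P'.carrier := f₂.comp f with hf₃def
  have hf₃app : ∀ l, f₃ l = f₂ (f l) := fun l => rfl
  have hf₃e : ∀ (γ : Γ) l, f₃ (γ • l) = γ • f₃ l := by
    intro γ l
    rw [hf₃app, hf₃app, hfe, hf₂e]
  have hf₃inj : Function.Injective f₃ := fun a b hab => hfinj (hf₂inj hab)
  set W := QuotMod f₃ hf₃e with hWdef
  set π := QuotMod.mk f₃ hf₃e with hπdef
  have hπe : ∀ (γ : Γ) r, π (γ • r) = γ • π r := fun γ r =>
    (QuotMod.smul_mk f₃ hf₃e γ r).symm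
  set w : W →+ Q'.carrier := QuotMod.lift f₃ hf₃e g₂ (fun l => hg₂f₂ (f l)) with hwdef
  have hwapp : ∀ r, w (π r) = g₂ r := fun r => rfl
  have hwe : ∀ (γ : Γ) x, w (γ • x) = γ • w x :=
    QuotMod.lift_equivariant f₃ hf₃e _ _ hg₂e
  obtain ⟨jP, hjP⟩ := exists_descend g hgsurj (π.comp f₂) (fun e he => by
    have : e ∈ g.ker := he
    rw [hgk] at this
    obtain ⟨l', rfl⟩ := this
    show π (f₂ (f l')) = 0
    exact (QuotMod.mk_eq_zero f₃ hf₃e).mpr ⟨l', rfl⟩)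
  have hjP' : ∀ e, jP (g e) = π (f₂ e) := hjP
  have hjPe : ∀ (γ : Γ) p, jP (γ • p) = γ • jP p := by
    intro γ p
    obtain ⟨e, rfl⟩ := hgsurj p
    calc jP (γ • g e) = jP (g (γ • e)) := by rw [hge]
      _ = π (f₂ (γ • e)) := hjP' _
      _ = γ • π (f₂ e) := by rw [hf₂e, hπe]
      _ = γ • jP (g e) := by rw [hjP']
  have hjPinj : Function.Injective jP := by
    rw [injective_iff_map_eq_zero]
    intro p hp
    obtain ⟨e, rfl⟩ := hgsurj p
    rw [hjP'] at hp
    obtain ⟨l', hl'⟩ := (QuotMod.mk_eq_zero f₃ hf₃e).mp hp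
    have : f l' = e := hf₂inj hl'
    rw [← this]
    exact hgf l'
  have hwsurj : Function.Surjective w := by
    intro q'
    obtain ⟨r, hr⟩ := hg₂surj q'
    exact ⟨π r, by rw [hwapp]; exact hr⟩
  have hkerW : w.ker = jP.range := by
    ext x
    constructor
    · intro hx
      obtain ⟨r, rfl⟩ := QuotMod.mk_surjective f₃ hf₃e x
      have hx' : g₂ r = 0 := hx
      have : r ∈ g₂.ker := hx'
      rw [hker₂] at this
      obtain ⟨e, rfl⟩ := this
      exact ⟨g e, hjP' e⟩
    · rintro ⟨p, rfl⟩
      obtain ⟨e, rfl⟩ := hgsurj p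
      show w (jP (g e)) = 0
      rw [hjP', hwapp]
      exact hg₂f₂ e
  -- second splitting : W ≃ P × Q'
  obtain ⟨ιPP, bP, hbP⟩ := id hPperm
  obtain ⟨ιQ', bQ', hbQ'⟩ := id hQ'perm
  haveI : Finite ιPP := Module.Finite.finite_basis bP
  haveI : Fintype ιPP := Fintype.ofFinite ιPP
  obtain ⟨e₂, he₂⟩ := exists_equivariant_splitting bP bQ' hbP hbQ' jP w
    hjPe hwe hjPinj hwsurj hkerW
  have he₂s := symm_equivariant e₂ he₂
  set g₄ : (Q.carrier × P'.carrier) →+ (P.carrier × Q'.carrier) :=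
    e₂.symm.toAddMonoidHom.comp π with hg₄def
  have hg₄app : ∀ r, g₄ r = e₂.symm (π r) := fun r => rfl
  have hg₄e : ∀ (γ : Γ) r, g₄ (γ • r) = γ • g₄ r := by
    intro γ r
    rw [hg₄app, hg₄app, hπe, he₂s]
  have hg₄surj : Function.Surjective g₄ := fun y => by
    obtain ⟨x, hx⟩ := QuotMod.mk_surjective f₃ hf₃e (e₂ y)
    exact ⟨x, by rw [hg₄app, hπdef, hx, e₂.symm_apply_apply]⟩
  have hker₄ : g₄.ker = f₃.range := by
    ext r
    have : g₄ r = 0 ↔ π r = 0 := by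
      rw [hg₄app]
      constructor
      · intro hgr
        have := congrArg e₂ hgr
        rwa [e₂.apply_symm_apply, map_zero] at this
      · intro hπr
        rw [hπr, map_zero]
    constructor
    · intro hr
      exact (QuotMod.mk_eq_zero f₃ hf₃e).mp (this.mp hr)
    · intro hr
      exact this.mpr ((QuotMod.mk_eq_zero f₃ hf₃e).mpr hr)
  -- conclusion
  exact ⟨Q.prod P', P.prod Q', f₃, g₄,
    QPAux.isPermutation_prod hQperm hP'perm, QPAux.isPermutation_prod hPperm hQ'perm,
    hf₃e, hg₄e, hf₃inj, hg₄surj, hker₄⟩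
end

section
/- Let n ≥ 3 be odd, let P be the weight lattice of type A_{n-1}, realized as the quotient of ℤⁿ with generators e₁,…,e_n subject to e₁+⋯+e_n = 0, and let A = S_n × S₂ act on P where S_n permutes the e_i and the nontrivial element of S₂ sends each e_i to −e_i. Then there is a short exact sequence of A-lattices 0 → M' → M → P → 0 with both M and M' permutation A-lattices; in particular P is the quotient of a permutation lattice by a permutation sublattice. -/
universe u

open scoped BigOperators

/-- The group `A = Sₙ × S₂`, with `S₂` realized as `ℤˣ = {±1}`. -/
abbrev AGroup (n : ℕ) := Equiv.Perm (Fin n) × ℤˣ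

/-- The action of `A = Sₙ × S₂` on `ℤⁿ`: `Sₙ` permutes the generators `e₁, …, e_n` and
the nontrivial element of `S₂` sends each `e_i` to `−e_i`. -/
def aAct (n : ℕ) (a : AGroup n) (x : Fin n → ℤ) : Fin n → ℤ :=
  fun i => (a.2 : ℤ) * x (a.1.symm i)

section Aux

/-- The coordinate-permutation action on `ι → ℤ`. -/
def permSMul {Γ : Type} [Group Γ] (ι : Type) [MulAction Γ ι]
    (γ : Γ) (x : ι → ℤ) : ι → ℤ := fun i => x (γ⁻¹ • i)

def permDMA {Γ : Type} [Group Γ] (ι : Type) [MulAction Γ ι] :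
    DistribMulAction Γ (ι → ℤ) where
  smul := permSMul ι
  one_smul x := by funext i; show x (1⁻¹ • i) = x i; simp
  mul_smul γ δ x := by
    funext i
    show x ((γ * δ)⁻¹ • i) = x (δ⁻¹ • γ⁻¹ • i)
    rw [mul_inv_rev, mul_smul]
  smul_zero γ := rfl
  smul_add γ x y := rfl

/-- The permutation `Γ`-lattice on a finite `Γ`-set `ι`. -/
def permGLat {Γ : Type} [Group Γ] (ι : Type) [Fintype ι] [MulAction Γ ι] :
    GLat Γ :=
  { carrier := ι → ℤ, act := permDMA ι }

lemma permGLat_smul {Γ : Type} [Group Γ] (ι : Type) [Fintype ι] [MulAction Γ ι]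
    (γ : Γ) (x : (permGLat ι : GLat Γ).carrier) (i : ι) :
    (γ • x) i = x (γ⁻¹ • i) := rfl

lemma permSMul_single {Γ : Type} [Group Γ] (ι : Type) [Fintype ι]
    [DecidableEq ι] [MulAction Γ ι] (γ : Γ) (i : ι) :
    permSMul ι γ ((Pi.basisFun ℤ ι) i) = (Pi.basisFun ℤ ι) (γ • i) := by
  funext j
  show (Pi.basisFun ℤ ι) i (γ⁻¹ • j) = (Pi.basisFun ℤ ι) (γ • i) j
  rw [Pi.basisFun_apply, Pi.basisFun_apply, Pi.single_apply, Pi.single_apply]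
  by_cases h : j = γ • i
  · rw [if_pos h, if_pos (by rw [h]; simp)]
  · rw [if_neg h, if_neg (fun hc => h (by rw [← hc]; simp))]

lemma permGLat_isPermutation {Γ : Type} [Group Γ] (ι : Type) [Fintype ι]
    [DecidableEq ι] [MulAction Γ ι] : (permGLat ι : GLat Γ).IsPermutation := by
  refine ⟨ι, Pi.basisFun ℤ ι, fun γ => ⟨MulAction.toPerm γ, fun i => ?_⟩⟩
  show permSMul ι γ ((Pi.basisFun ℤ ι) i) = (Pi.basisFun ℤ ι) (γ • i)
  exact permSMul_single ι γ i

/-- The index `Γ`-set for `M`. -/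
instance actM (n : ℕ) : MulAction (AGroup n) ((Fin n × ℤˣ) ⊕ PUnit) where
  smul a := Sum.map (fun iη => (a.1 iη.1, a.2 * iη.2)) id
  one_smul j := by
    cases j with
    | inl iη =>
        show Sum.inl (((1:AGroup n).1) iη.1, (1:AGroup n).2 * iη.2) = Sum.inl iη
        simp
    | inr u => rfl
  mul_smul a b j := by
    cases j with
    | inl iη =>
        show Sum.inl (((a*b).1) iη.1, (a*b).2 * iη.2) =
          Sum.inl (a.1 (b.1 iη.1), a.2 * (b.2 * iη.2))
        simp [Equiv.Perm.mul_apply, mul_assoc]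
    | inr u => rfl

/-- The index `Γ`-set for `M'`. -/
instance actM' (n : ℕ) : MulAction (AGroup n) (Fin n ⊕ ℤˣ) where
  smul a := Sum.map a.1 (a.2 * ·)
  one_smul j := by
    cases j with
    | inl i =>
        show Sum.inl (((1:AGroup n).1) i) = Sum.inl i
        simp
    | inr η =>
        show Sum.inr ((1:AGroup n).2 * η) = Sum.inr η
        simp
  mul_smul a b j := by
    cases j with
    | inl i =>
        show Sum.inl (((a*b).1) i) = Sum.inl (a.1 (b.1 i))
        simp [Equiv.Perm.mul_apply]
    | inr η =>
        show Sum.inr ((a*b).2 * η) = Sum.inr (a.2 * (b.2 * η))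
        simp [mul_assoc]

lemma actM_smul_inl (n : ℕ) (a : AGroup n) (i : Fin n) (η : ℤˣ) :
    a • (Sum.inl (i, η) : (Fin n × ℤˣ) ⊕ PUnit) = Sum.inl (a.1 i, a.2 * η) := rfl

lemma actM_smul_inr (n : ℕ) (a : AGroup n) (u : PUnit) :
    a • (Sum.inr u : (Fin n × ℤˣ) ⊕ PUnit) = Sum.inr u := rfl

lemma actM'_smul_inl (n : ℕ) (a : AGroup n) (i : Fin n) :
    a • (Sum.inl i : Fin n ⊕ ℤˣ) = Sum.inl (a.1 i) := rfl

lemma actM'_smul_inr (n : ℕ) (a : AGroup n) (η : ℤˣ) :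
    a • (Sum.inr η : Fin n ⊕ ℤˣ) = Sum.inr (a.2 * η) := rfl

open BigOperators in
/-- The map `M' → M`. -/
def fmap (n : ℕ) (k : ℤ) : ((Fin n ⊕ ℤˣ) → ℤ) →+ (((Fin n × ℤˣ) ⊕ PUnit) → ℤ) :=
  AddMonoidHom.mk'
    (fun y => Sum.elim (fun iη => y (.inl iη.1) + y (.inr iη.2))
      (fun _ => (∑ i, y (.inl i)) + (y (.inr 1) + y (.inr (-1))) * k))
    (by
      intro y z
      funext j
      cases j with
      | inl iη => show _ = _; simp [Pi.add_apply]; ring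
      | inr u =>
          show (∑ i, (y (.inl i) + z (.inl i))) + _ = _
          rw [Finset.sum_add_distrib]
          simp [Pi.add_apply]; ring)

/-- The difference map from `M` to `ℤⁿ`. -/
def dmap (n : ℕ) : (((Fin n × ℤˣ) ⊕ PUnit) → ℤ) →+ (Fin n → ℤ) :=
  AddMonoidHom.mk'
    (fun x i => x (.inl (i, 1)) - x (.inl (i, -1)))
    (by intro x y; funext i; simp [Pi.add_apply]; ring)

end Aux


/-- Let `n ≥ 3` be odd and let `P` be the weight lattice of type `A_{n-1}`, realized as the
quotient of `ℤⁿ` (with generators `e₁, …, e_n`) by the relation `e₁ + ⋯ + e_n = 0`, with the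
action of `A = Sₙ × S₂` described above.  Then there is a short exact sequence of `A`-lattices
`0 → M' → M → P → 0` with both `M` and `M'` permutation `A`-lattices. -/
theorem weight_lattice_resolution_by_permutation_lattices
    (n : ℕ) (hn3 : 3 ≤ n) (hodd : Odd n)
    (P : GLat (AGroup n)) (p : (Fin n → ℤ) →+ P.carrier)
    (hsurj : Function.Surjective p)
    (hker : p.ker = AddSubgroup.zmultiples (fun _ => (1 : ℤ)))
    (hequi : ∀ (a : AGroup n) (x : Fin n → ℤ), p (aAct n a x) = a • p x) :
    ∃ (M M' : GLat (AGroup n)) (f : M' →+ M) (g : M →+ P),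
      M.IsPermutation ∧ M'.IsPermutation ∧
      GLat.Equivariant f ∧ GLat.Equivariant g ∧ GLat.SES f g := by
  obtain ⟨k, hk⟩ := hodd
  set K : ℤ := (k : ℤ) with hK
  have hnK : (n : ℤ) = 2 * K + 1 := by rw [hk]; push_cast; ring
  refine ⟨permGLat ((Fin n × ℤˣ) ⊕ PUnit), permGLat (Fin n ⊕ ℤˣ),
    fmap n K, p.comp (dmap n),
    permGLat_isPermutation _, permGLat_isPermutation _, ?_, ?_, ?_, ?_, ?_⟩
  · -- equivariance of f
    intro a y
    funext j
    cases j with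
    | inl iη => rfl
    | inr u =>
        obtain ⟨σ, ε⟩ := a
        show (∑ i, y ((σ, ε)⁻¹ • (Sum.inl i : Fin n ⊕ ℤˣ)))
            + (y ((σ, ε)⁻¹ • (Sum.inr 1 : Fin n ⊕ ℤˣ))
              + y ((σ, ε)⁻¹ • (Sum.inr (-1) : Fin n ⊕ ℤˣ))) * K
            = (∑ i, y (.inl i)) + (y (.inr 1) + y (.inr (-1))) * K
        rcases Int.units_eq_one_or ε with h | h <;> subst h
        · show (∑ i, y (Sum.inl (σ⁻¹ i))) + (y (Sum.inr 1) + y (Sum.inr (-1))) * K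
              = (∑ i, y (.inl i)) + (y (.inr 1) + y (.inr (-1))) * K
          rw [Equiv.sum_comp σ⁻¹ (fun i => y (Sum.inl i))]
        · show (∑ i, y (Sum.inl (σ⁻¹ i))) + (y (Sum.inr (-1)) + y (Sum.inr 1)) * K
              = (∑ i, y (.inl i)) + (y (.inr 1) + y (.inr (-1))) * K
          rw [Equiv.sum_comp σ⁻¹ (fun i => y (Sum.inl i)),
            add_comm (y (Sum.inr (-1)))]
  · -- equivariance of g
    intro a x
    have hda : dmap n (a • x) = aAct n a (dmap n x) := by
      funext i
      obtain ⟨σ, ε⟩ := a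
      show x ((σ, ε)⁻¹ • (Sum.inl (i, 1) : (Fin n × ℤˣ) ⊕ PUnit))
          - x ((σ, ε)⁻¹ • (Sum.inl (i, -1) : (Fin n × ℤˣ) ⊕ PUnit))
          = (ε : ℤ) * (x (.inl (σ.symm i, 1)) - x (.inl (σ.symm i, -1)))
      rcases Int.units_eq_one_or ε with h | h
      · subst h
        show x (Sum.inl (σ.symm i, 1)) - x (Sum.inl (σ.symm i, -1))
            = ((1 : ℤˣ) : ℤ) * (x (.inl (σ.symm i, 1)) - x (.inl (σ.symm i, -1)))
        norm_num
      · subst h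
        show x (Sum.inl (σ.symm i, -1)) - x (Sum.inl (σ.symm i, 1))
            = ((-1 : ℤˣ) : ℤ) * (x (.inl (σ.symm i, 1)) - x (.inl (σ.symm i, -1)))
        norm_num
    show p (dmap n (a • x)) = a • p (dmap n x)
    rw [hda, hequi]
  · -- injective
    intro y1 y2 hy
    have h0 : ∀ y : (Fin n ⊕ ℤˣ) → ℤ, fmap n K y = 0 → y = 0 := by
      intro y h
      have h1 : ∀ i : Fin n, ∀ η : ℤˣ, y (.inl i) + y (.inr η) = 0 := by
        intro i η
        exact congrFun h (Sum.inl (i, η))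
      have h3 : (∑ i, y (.inl i)) + (y (.inr 1) + y (.inr (-1))) * K = 0 :=
        congrFun h (Sum.inr PUnit.unit)
      have i0 : Fin n := ⟨0, by omega⟩
      have hc : y (.inr (-1)) = y (.inr 1) := by
        have := h1 i0 1; have := h1 i0 (-1); omega
      have hli : ∀ i : Fin n, y (.inl i) = -y (.inr 1) := by
        intro i; have := h1 i 1; omega
      have hsum : (∑ i, y (.inl i)) = -(n : ℤ) * y (.inr 1) := by
        rw [Finset.sum_congr rfl (fun i _ => hli i)]
        simp [Finset.card_univ, mul_comm]
      rw [hsum, hc] at h3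
      have hz : y (.inr 1) = 0 := by
        rw [hnK] at h3; nlinarith [h3]
      funext j
      cases j with
      | inl i => have := hli i; rw [hz] at this; simpa using this
      | inr η =>
          rcases Int.units_eq_one_or η with h' | h' <;> subst h'
          · exact hz
          · rw [hc]; exact hz
    have h : fmap n K (y1 - y2) = 0 := by
      exact (AddMonoidHom.map_sub (fmap n K) y1 y2).trans (sub_eq_zero_of_eq hy)
    exact sub_eq_zero.mp (h0 _ h)
  · -- surjective
    intro z
    obtain ⟨x, hx⟩ := hsurj z
    refine ⟨Sum.elim (fun iη => if iη.2 = 1 then x iη.1 else 0) (fun _ => (0:ℤ)), ?_⟩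
    show p (dmap n _) = z
    have : dmap n (Sum.elim (fun iη : Fin n × ℤˣ => if iη.2 = 1 then x iη.1 else 0)
        (fun _ => (0:ℤ) : PUnit.{1} → ℤ)) = x := by
      funext i
      show (if (1 : ℤˣ) = 1 then x i else 0) - (if (-1 : ℤˣ) = 1 then x i else 0) = x i
      rw [if_pos rfl, if_neg (by decide)]
      ring
    rw [this, hx]
  · -- kernel = range
    have hone : p (fun _ : Fin n => (1:ℤ)) = 0 := by
      rw [← AddMonoidHom.mem_ker, hker]
      exact AddSubgroup.mem_zmultiples _
    ext x
    rw [AddMonoidHom.mem_ker]; refine Iff.trans ?_ AddMonoidHom.mem_range.symm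
    constructor
    · intro hx
      have hxp : p (dmap n x) = 0 := hx
      have hmem2 : dmap n x ∈ AddSubgroup.zmultiples (fun _ : Fin n => (1:ℤ)) := by
        rw [← hker]; exact hxp
      obtain ⟨c, hc⟩ := AddSubgroup.mem_zmultiples_iff.mp hmem2
      have hci : ∀ i : Fin n, x (.inl (i, 1)) - x (.inl (i, -1)) = c := by
        intro i
        have h' := congrFun hc i
        have h'' : c • (1:ℤ) = x (.inl (i, 1)) - x (.inl (i, -1)) := h'
        simpa using h''.symm
      set S : ℤ := ∑ i, x (.inl (i, 1)) with hS
      set u : ℤ := x (.inr PUnit.unit) with hu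
      set b : ℤ := S - u - c * (K + 1) with hb
      set a : ℤ := b + c with ha
      refine ⟨Sum.elim (fun i => x (.inl (i, 1)) - a)
        (fun η => if η = 1 then a else b), ?_⟩
      funext j
      cases j with
      | inl iη =>
          obtain ⟨i, η⟩ := iη
          show (x (.inl (i, 1)) - a) + (if η = 1 then a else b) = x (.inl (i, η))
          rcases Int.units_eq_one_or η with h' | h' <;> subst h'
          · rw [if_pos rfl]; ring
          · rw [if_neg (by decide)]
            have := hci i
            omega
      | inr u' =>
          cases u'
          show (∑ i, (x (.inl (i, 1)) - a))
              + ((if (1:ℤˣ) = 1 then a else b) + (if (-1:ℤˣ) = 1 then a else b)) * K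
              = x (.inr PUnit.unit)
          rw [if_pos rfl, if_neg (by decide), Finset.sum_sub_distrib, ← hS]
          simp only [Finset.sum_const, Finset.card_univ, Fintype.card_fin, nsmul_eq_mul]
          rw [← hu, ha, hb]
          rw [show ((n:ℤ)) = 2*K+1 from hnK]
          ring
    · rintro ⟨y, rfl⟩
      show p (dmap n (fmap n K y)) = 0
      rw [← AddMonoidHom.mem_ker, hker, AddSubgroup.mem_zmultiples_iff]
      refine ⟨y (.inr 1) - y (.inr (-1)), ?_⟩
      funext i
      show (y (.inr 1) - y (.inr (-1))) • (1:ℤ)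
          = (y (.inl i) + y (.inr 1)) - (y (.inl i) + y (.inr (-1)))
      rw [smul_eq_mul]
      ring
end

section
/- Let n ≥ 3 be odd and let Q be the root lattice of type A_{n-1} with the action of A = S_n × S₂ (S_n acting by the standard Weyl group action, S₂ by −1). Then Q is a quasi-permutation A-lattice. -/
universe u

open scoped BigOperators

/-- The coordinate-sum homomorphism `ℤⁿ → ℤ`. -/
def sumHom (n : ℕ) : (Fin n → ℤ) →+ ℤ where
  toFun x := ∑ i, x i
  map_zero' := by simp
  map_add' x y := by simp [Finset.sum_add_distrib]

/-! ### Auxiliary constructions -/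

namespace RLQP

/-- Flip a boolean according to a sign. -/
def flipB (u : ℤˣ) (b : Bool) : Bool := if u = 1 then b else !b

lemma flipB_one (b : Bool) : flipB 1 b = b := rfl

lemma flipB_flipB (u : ℤˣ) (b : Bool) : flipB u (flipB u b) = b := by
  rcases Int.units_eq_one_or u with h | h <;> subst h <;> simp [flipB]

lemma flipB_mul (u v : ℤˣ) (b : Bool) : flipB (u * v) b = flipB u (flipB v b) := by
  rcases Int.units_eq_one_or u with h | h <;>
    rcases Int.units_eq_one_or v with h' | h' <;> subst h <;> subst h' <;>
    simp [flipB]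

/-- The permutation of `Bool` given by a sign. -/
def flipPerm (u : ℤˣ) : Equiv.Perm Bool :=
  ⟨flipB u, flipB u, flipB_flipB u, flipB_flipB u⟩

/-- The sign attached to a boolean: `true ↦ 1`, `false ↦ -1`. -/
def sgnB (b : Bool) : ℤ := if b then 1 else -1

lemma sgnB_flipB (u : ℤˣ) (b : Bool) : sgnB (flipB u b) = (u : ℤ) * sgnB b := by
  rcases Int.units_eq_one_or u with h | h <;> subst h <;> cases b <;>
    simp [flipB, sgnB]

/-- Index type of the big permutation lattice `P = ℤ[Fin n × ±1] ⊕ ℤ`. -/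
abbrev PIdx (n : ℕ) := (Fin n × Bool) ⊕ Unit

/-- Index type of the quotient permutation lattice `P'`. -/
abbrev P'Idx (n : ℕ) := Fin n ⊕ Bool

/-- The permutation of `PIdx n` induced by `a ∈ A`. -/
def pIdxMap (n : ℕ) (a : AGroup n) : Equiv.Perm (PIdx n) :=
  Equiv.sumCongr (Equiv.prodCongr a.1 (flipPerm a.2)) (Equiv.refl Unit)

/-- The permutation of `P'Idx n` induced by `a ∈ A`. -/
def p'IdxMap (n : ℕ) (a : AGroup n) : Equiv.Perm (P'Idx n) :=
  Equiv.sumCongr a.1 (flipPerm a.2)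

instance pSMul (n : ℕ) : SMul (AGroup n) (PIdx n → ℤ) :=
  ⟨fun a x j => x ((pIdxMap n a).symm j)⟩

instance p'SMul (n : ℕ) : SMul (AGroup n) (P'Idx n → ℤ) :=
  ⟨fun a x j => x ((p'IdxMap n a).symm j)⟩

lemma pSMul_def (n : ℕ) (a : AGroup n) (x : PIdx n → ℤ) (j : PIdx n) :
    (a • x) j = x ((pIdxMap n a).symm j) := rfl

lemma p'SMul_def (n : ℕ) (a : AGroup n) (x : P'Idx n → ℤ) (j : P'Idx n) :
    (a • x) j = x ((p'IdxMap n a).symm j) := rfl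

lemma pIdxMap_one (n : ℕ) : pIdxMap n 1 = Equiv.refl _ := by
  ext j
  rcases j with ⟨i, b⟩ | u <;> rfl

lemma pIdxMap_mul (n : ℕ) (a b : AGroup n) :
    pIdxMap n (a * b) = (pIdxMap n b).trans (pIdxMap n a) := by
  ext j
  rcases j with ⟨i, c⟩ | u
  · simp [pIdxMap, Equiv.sumCongr_apply, flipPerm, Equiv.Perm.mul_apply, flipB_mul,
      Prod.fst_mul, Prod.snd_mul]
  · rfl

lemma p'IdxMap_one (n : ℕ) : p'IdxMap n 1 = Equiv.refl _ := by
  ext j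
  rcases j with i | b <;> rfl

lemma p'IdxMap_mul (n : ℕ) (a b : AGroup n) :
    p'IdxMap n (a * b) = (p'IdxMap n b).trans (p'IdxMap n a) := by
  ext j
  rcases j with i | c
  · simp [p'IdxMap, Equiv.Perm.mul_apply]
  · simp [p'IdxMap, flipPerm, flipB_mul, Prod.snd_mul]

instance pAct (n : ℕ) : DistribMulAction (AGroup n) (PIdx n → ℤ) where
  one_smul x := by funext j; rw [pSMul_def, pIdxMap_one]; rfl
  mul_smul a b x := by
    funext j
    rw [pSMul_def, pSMul_def, pSMul_def, pIdxMap_mul]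
    rfl
  smul_add a x y := rfl
  smul_zero a := rfl

instance p'Act (n : ℕ) : DistribMulAction (AGroup n) (P'Idx n → ℤ) where
  one_smul x := by funext j; rw [p'SMul_def, p'IdxMap_one]; rfl
  mul_smul a b x := by
    funext j
    rw [p'SMul_def, p'SMul_def, p'SMul_def, p'IdxMap_mul]
    rfl
  smul_add a x y := rfl
  smul_zero a := rfl

/-- The lattice `P`. -/
def PLat (n : ℕ) : GLat (AGroup n) := { carrier := PIdx n → ℤ }

/-- The lattice `P'`. -/
def P'Lat (n : ℕ) : GLat (AGroup n) := { carrier := P'Idx n → ℤ }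

/-- The map `g : P → P'`. -/
def gMap (n : ℕ) (m : ℤ) : (PIdx n → ℤ) →+ (P'Idx n → ℤ) where
  toFun x := fun j =>
    match j with
    | .inl i => x (.inr ()) - x (.inl (i, true)) - x (.inl (i, false))
    | .inr true => (∑ i, x (.inl (i, true))) - x (.inr ()) * m
    | .inr false => (∑ i, x (.inl (i, false))) + x (.inr ()) * (1 + m - (n : ℤ))
  map_zero' := by
    funext j
    rcases j with i | b
    · simp
    · cases b <;> simp
  map_add' x y := by
    funext j
    rcases j with i | b
    · show (x + y) (Sum.inr ()) - (x + y) (Sum.inl (i, true)) - (x + y) (Sum.inl (i, false)) =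
        (x (Sum.inr ()) - x (Sum.inl (i, true)) - x (Sum.inl (i, false))) +
        (y (Sum.inr ()) - y (Sum.inl (i, true)) - y (Sum.inl (i, false))); simp; ring
    · cases b
      · show (∑ i, (x + y) (Sum.inl (i, false))) + (x + y) (Sum.inr ()) * (1 + m - (n : ℤ)) =
          ((∑ i, x (Sum.inl (i, false))) + x (Sum.inr ()) * (1 + m - (n : ℤ))) +
          ((∑ i, y (Sum.inl (i, false))) + y (Sum.inr ()) * (1 + m - (n : ℤ)))
        simp [Finset.sum_add_distrib]; ring
      · show (∑ i, (x + y) (Sum.inl (i, true))) - (x + y) (Sum.inr ()) * m =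
          ((∑ i, x (Sum.inl (i, true))) - x (Sum.inr ()) * m) +
          ((∑ i, y (Sum.inl (i, true))) - y (Sum.inr ()) * m)
        simp [Finset.sum_add_distrib]; ring


/-- Application lemmas for the actions. -/
lemma flipB_neg (b : Bool) : flipB (-1) b = !b := by simp [flipB]

lemma pSMul_inl (n : ℕ) (a : AGroup n) (x : PIdx n → ℤ) (i : Fin n) (b : Bool) :
    (a • x) (Sum.inl (i, b)) = x (Sum.inl (a.1.symm i, flipB a.2 b)) := rfl

lemma pSMul_inr (n : ℕ) (a : AGroup n) (x : PIdx n → ℤ) :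
    (a • x) (Sum.inr ()) = x (Sum.inr ()) := rfl

lemma p'SMul_inl (n : ℕ) (a : AGroup n) (y : P'Idx n → ℤ) (i : Fin n) :
    (a • y) (Sum.inl i) = y (Sum.inl (a.1.symm i)) := rfl

lemma p'SMul_inr (n : ℕ) (a : AGroup n) (y : P'Idx n → ℤ) (b : Bool) :
    (a • y) (Sum.inr b) = y (Sum.inr (flipB a.2 b)) := rfl

/-- The inclusion `Q → P`. -/
def fHat (n : ℕ) {QC : Type} [AddCommGroup QC] (jj : QC →+ (Fin n → ℤ)) :
    QC →+ (PIdx n → ℤ) where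
  toFun q p :=
    match p with
    | .inl ib => sgnB ib.2 * jj q ib.1
    | .inr _ => 0
  map_zero' := by funext p; rcases p with ⟨i, b⟩ | u <;> simp
  map_add' q q' := by funext p; rcases p with ⟨i, b⟩ | u <;> simp [mul_add]

lemma fHat_inl (n : ℕ) {QC : Type} [AddCommGroup QC] (jj : QC →+ (Fin n → ℤ))
    (q : QC) (i : Fin n) (b : Bool) :
    fHat n jj q (Sum.inl (i, b)) = sgnB b * jj q i := rfl

lemma fHat_inr (n : ℕ) {QC : Type} [AddCommGroup QC] (jj : QC →+ (Fin n → ℤ))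
    (q : QC) (u : Unit) : fHat n jj q (Sum.inr u) = 0 := rfl

lemma gMap_inl (n : ℕ) (m : ℤ) (x : PIdx n → ℤ) (i : Fin n) :
    gMap n m x (Sum.inl i) =
      x (Sum.inr ()) - x (Sum.inl (i, true)) - x (Sum.inl (i, false)) := rfl

lemma gMap_true (n : ℕ) (m : ℤ) (x : PIdx n → ℤ) :
    gMap n m x (Sum.inr true) =
      (∑ i, x (Sum.inl (i, true))) - x (Sum.inr ()) * m := rfl

lemma gMap_false (n : ℕ) (m : ℤ) (x : PIdx n → ℤ) :
    gMap n m x (Sum.inr false) =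
      (∑ i, x (Sum.inl (i, false))) + x (Sum.inr ()) * (1 + m - (n : ℤ)) := rfl

/-- The basis of `P` is permuted by the action. -/
lemma pPerm (n : ℕ) (γ : AGroup n) (i : PIdx n) :
    γ • (Pi.basisFun ℤ (PIdx n)) i = (Pi.basisFun ℤ (PIdx n)) (pIdxMap n γ i) := by
  funext jx
  rw [pSMul_def, Pi.basisFun_apply, Pi.basisFun_apply, Pi.single_apply, Pi.single_apply]
  simp only [Equiv.symm_apply_eq]

/-- The basis of `P'` is permuted by the action. -/
lemma p'Perm (n : ℕ) (γ : AGroup n) (i : P'Idx n) :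
    γ • (Pi.basisFun ℤ (P'Idx n)) i = (Pi.basisFun ℤ (P'Idx n)) (p'IdxMap n γ i) := by
  funext jx
  rw [p'SMul_def, Pi.basisFun_apply, Pi.basisFun_apply, Pi.single_apply, Pi.single_apply]
  simp only [Equiv.symm_apply_eq]


lemma fHat_equiv (n : ℕ) {QC : Type} [AddCommGroup QC] [DistribMulAction (AGroup n) QC]
    (jj : QC →+ (Fin n → ℤ))
    (hequi : ∀ (a : AGroup n) (q : QC), jj (a • q) = aAct n a (jj q))
    (a : AGroup n) (q : QC) : fHat n jj (a • q) = a • fHat n jj q := by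
  funext p
  rcases p with ⟨i, b⟩ | ⟨⟩
  · rw [pSMul_inl, fHat_inl, fHat_inl, hequi, sgnB_flipB]
    show sgnB b * ((a.2 : ℤ) * jj q (a.1.symm i)) = _
    ring
  · rw [pSMul_inr, fHat_inr, fHat_inr]

lemma gMap_equiv (n : ℕ) (k : ℤ) (hm : (n : ℤ) = 2 * k + 1)
    (a : AGroup n) (x : PIdx n → ℤ) : gMap n k (a • x) = a • gMap n k x := by
  have hsum : ∀ c : Bool,
      (∑ i, x (Sum.inl (a.1.symm i, c))) = ∑ i, x (Sum.inl (i, c)) := fun c =>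
    Equiv.sum_comp (a.1.symm : Fin n ≃ Fin n) (fun i => x (Sum.inl (i, c)))
  funext jx
  rcases jx with i | b
  · rw [p'SMul_inl, gMap_inl, gMap_inl, pSMul_inr, pSMul_inl, pSMul_inl]
    rcases Int.units_eq_one_or a.2 with h | h <;> rw [h]
    · rw [flipB_one, flipB_one]
    · rw [flipB_neg, flipB_neg]
      show _ - x (Sum.inl (a.1.symm i, false)) - x (Sum.inl (a.1.symm i, true)) = _
      ring
  · rw [p'SMul_inr]
    have hc : (1 + k - (n : ℤ)) = -k := by omega
    rcases Int.units_eq_one_or a.2 with h | h <;> cases b <;>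
        simp only [h, flipB_one, flipB_neg, Bool.not_false, Bool.not_true,
          gMap_false, gMap_true, pSMul_inl, pSMul_inr] <;>
      rw [hsum]
    · rw [hc]; ring
    · rw [hc]; ring

lemma fHat_injective (n : ℕ) {QC : Type} [AddCommGroup QC]
    (jj : QC →+ (Fin n → ℤ)) (hinj : Function.Injective jj) :
    Function.Injective (fHat n jj) := by
  intro q q' h
  apply hinj
  funext i
  have := congrFun h (Sum.inl (i, true))
  rw [fHat_inl, fHat_inl] at this
  simpa [sgnB] using this

lemma gMap_surjective (n : ℕ) (hn : 0 < n) (m : ℤ) :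
    Function.Surjective (gMap n m) := by
  classical
  have i0 : Fin n := ⟨0, hn⟩
  intro y
  set u : ℤ := (∑ i, y (Sum.inl i)) + y (Sum.inr true) + y (Sum.inr false) with hu
  set S : ℤ := y (Sum.inr true) + u * m with hS
  refine ⟨fun p =>
    match p with
    | .inl (i, true) => if i = i0 then S else 0
    | .inl (i, false) => u - y (Sum.inl i) - (if i = i0 then S else 0)
    | .inr _ => u, ?_⟩
  funext jx
  rcases jx with i | b
  · show u - _ - (u - y (Sum.inl i) - _) = y (Sum.inl i)
    ring
  · cases b
    · show (∑ i, (u - y (Sum.inl i) - (if i = i0 then S else 0))) +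
        u * (1 + m - (n : ℤ)) = y (Sum.inr false)
      rw [Finset.sum_sub_distrib, Finset.sum_sub_distrib, Finset.sum_const,
        Finset.sum_ite_eq' Finset.univ i0 (fun _ => S)]
      simp only [Finset.card_univ, Fintype.card_fin, Finset.mem_univ, if_true,
        nsmul_eq_mul]
      linear_combination hu - hS
    · show (∑ i, (if i = i0 then S else 0)) - u * m = y (Sum.inr true)
      rw [Finset.sum_ite_eq' Finset.univ i0 (fun _ => S)]
      simp only [Finset.mem_univ, if_true]
      rw [hS]; ring

lemma gMap_ker_eq_range (n : ℕ) (m : ℤ) {QC : Type} [AddCommGroup QC]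
    (jj : QC →+ (Fin n → ℤ)) (hrange : jj.range = (sumHom n).ker) :
    (gMap n m).ker = (fHat n jj).range := by
  ext x
  simp only [AddMonoidHom.mem_ker, AddMonoidHom.mem_range]
  constructor
  · intro hx
    have h1 : ∀ i : Fin n,
        x (Sum.inr ()) - x (Sum.inl (i, true)) - x (Sum.inl (i, false)) = 0 := by
      intro i
      have := congrFun hx (Sum.inl i)
      rwa [gMap_inl, Pi.zero_apply] at this
    have h2 : (∑ i, x (Sum.inl (i, true))) - x (Sum.inr ()) * m = 0 := by
      have := congrFun hx (Sum.inr true)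
      rwa [gMap_true, Pi.zero_apply] at this
    have h3 : (∑ i, x (Sum.inl (i, false))) +
        x (Sum.inr ()) * (1 + m - (n : ℤ)) = 0 := by
      have := congrFun hx (Sum.inr false)
      rwa [gMap_false, Pi.zero_apply] at this
    have h4 : (n : ℤ) * x (Sum.inr ()) - (∑ i, x (Sum.inl (i, true))) -
        (∑ i, x (Sum.inl (i, false))) = 0 := by
      have h5 := Finset.sum_eq_zero (fun (i : Fin n) (_ : i ∈ Finset.univ) => h1 i)
      rw [Finset.sum_sub_distrib, Finset.sum_sub_distrib, Finset.sum_const,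
        Finset.card_univ, Fintype.card_fin, nsmul_eq_mul] at h5
      linarith [h5]
    have hu0 : x (Sum.inr ()) = 0 := by linear_combination h4 + h2 + h3
    have hsum0 : (sumHom n) (fun i => x (Sum.inl (i, true))) = 0 := by
      show (∑ i, x (Sum.inl (i, true))) = 0
      linear_combination h2 + m * hu0
    have hmem : (fun i => x (Sum.inl (i, true))) ∈ jj.range := by
      rw [hrange]; exact hsum0
    obtain ⟨q, hq⟩ := hmem
    refine ⟨q, ?_⟩
    funext p
    rcases p with ⟨i, b⟩ | ⟨⟩
    · have hqi : jj q i = x (Sum.inl (i, true)) := congrFun hq i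
      cases b
      · rw [fHat_inl]
        show (-1 : ℤ) * jj q i = _
        have h6 := h1 i
        rw [hu0] at h6
        linarith [hqi, h6]
      · rw [fHat_inl]
        show (1 : ℤ) * jj q i = _
        rw [one_mul, hqi]
    · rw [fHat_inr]
      exact hu0.symm
  · rintro ⟨q, rfl⟩
    have hmem : jj q ∈ (sumHom n).ker := by rw [← hrange]; exact ⟨q, rfl⟩
    have hq0 : (∑ i, jj q i) = 0 := hmem
    funext jx
    rcases jx with i | b
    · rw [gMap_inl, Pi.zero_apply, fHat_inl, fHat_inl, fHat_inr]
      show (0 : ℤ) - (1 : ℤ) * jj q i - (-1 : ℤ) * jj q i = 0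
      ring
    · cases b
      · rw [gMap_false, Pi.zero_apply, fHat_inr]
        have h7 : (∑ i, fHat n jj q (Sum.inl (i, false))) = -(∑ i, jj q i) := by
          rw [← Finset.sum_neg_distrib]
          refine Finset.sum_congr rfl (fun i _ => ?_)
          rw [fHat_inl]
          show (-1 : ℤ) * jj q i = -(jj q i)
          ring
        rw [h7, hq0]
        ring
      · rw [gMap_true, Pi.zero_apply, fHat_inr]
        have h7 : (∑ i, fHat n jj q (Sum.inl (i, true))) = (∑ i, jj q i) := by
          refine Finset.sum_congr rfl (fun i _ => ?_)
          rw [fHat_inl]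
          show (1 : ℤ) * jj q i = jj q i
          ring
        rw [h7, hq0]
        ring

end RLQP

/-- Let `n ≥ 3` be odd and let `Q` be the root lattice of type `A_{n-1}`, i.e. the sublattice
of `ℤⁿ` of vectors with zero coordinate sum, with the action of `A = Sₙ × S₂` (`Sₙ` permuting
coordinates, `S₂` acting by `−1`).  Then `Q` is a quasi-permutation `A`-lattice. -/
theorem root_lattice_quasiPermutation_SnxS2
    (n : ℕ) (hn3 : 3 ≤ n) (hodd : Odd n)
    (Q : GLat (AGroup n)) (j : Q.carrier →+ (Fin n → ℤ))
    (hinj : Function.Injective j)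
    (hrange : j.range = (sumHom n).ker)
    (hequi : ∀ (a : AGroup n) (q : Q.carrier), j (a • q) = aAct n a (j q)) :
    Q.IsQuasiPermutation := by
  classical
  obtain ⟨k, hk⟩ := hodd
  have hm : ((n : ℤ)) = 2 * (k : ℤ) + 1 := by omega
  have hn : 0 < n := by omega
  refine ⟨RLQP.PLat n, RLQP.P'Lat n, RLQP.fHat n j, RLQP.gMap n (k : ℤ),
    ⟨RLQP.PIdx n, Pi.basisFun ℤ (RLQP.PIdx n),
      fun γ => ⟨RLQP.pIdxMap n γ, fun i => RLQP.pPerm n γ i⟩⟩,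
    ⟨RLQP.P'Idx n, Pi.basisFun ℤ (RLQP.P'Idx n),
      fun γ => ⟨RLQP.p'IdxMap n γ, fun i => RLQP.p'Perm n γ i⟩⟩,
    fun a q => RLQP.fHat_equiv n j hequi a q,
    fun a x => RLQP.gMap_equiv n (k : ℤ) hm a x,
    RLQP.fHat_injective n j hinj,
    RLQP.gMap_surjective n hn (k : ℤ),
    RLQP.gMap_ker_eq_range n (k : ℤ) j hrange⟩
end

section
/- Let Γ be a finite group, L a Γ-lattice, and M a finite Γ-module with |Γ|·M = M. Then any surjective homomorphism of ℤ[Γ]-modules L → M is projective in the sense of Roiter, and given two exact sequences 0 → K → L → M → 0 and 0 → K' → L' → M → 0 of Γ-modules with L, L' Γ-lattices, there is an isomorphism of Γ-lattices L ⊕ K' ≅ L' ⊕ K. -/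
set_option maxRecDepth 4000


universe u

/-- Roiter's notion of a projective surjection: a surjective equivariant `f : L → M` is
projective if every surjective equivariant map from a `Γ`-lattice onto `M` factors
`f` through it. -/
def RoiterProjective {Γ : Type u} [Group Γ] (L : GLat Γ) (M : Type u)
    [AddCommGroup M] [DistribMulAction Γ M] (f : L.carrier →+ M) : Prop :=
  ∀ (B : GLat Γ) (g : B.carrier →+ M),
    (∀ (γ : Γ) (b : B.carrier), g (γ • b) = γ • g b) → Function.Surjective g →
      ∃ h : L.carrier →+ B.carrier,
        GLat.Equivariant h ∧ g.comp h = f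

private theorem roiter_part1 {Γ : Type u} [Group Γ] [Fintype Γ]
    (M : Type u) [AddCommGroup M] [DistribMulAction Γ M] [Finite M]
    (hM : ∀ m : M, ∃ m' : M, (Fintype.card Γ) • m' = m)
    (L : GLat Γ) (f : L.carrier →+ M)
    (hf : ∀ (γ : Γ) (x : L.carrier), f (γ • x) = γ • f x)
    (_hsurj : Function.Surjective f) : RoiterProjective L M f := by
  classical
  intro B g hg gsurj
  set n := Fintype.card Γ with hn
  set ν : M →+ M := AddMonoidHom.mk' (fun m => n • m) (fun a b => smul_add n a b) with hν
  have νsurj : Function.Surjective ν := fun m => hM m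
  have νinj : Function.Injective ν := Finite.injective_iff_surjective.2 νsurj
  set u : M ≃+ M := AddEquiv.ofBijective ν ⟨νinj, νsurj⟩ with hu
  have huν : ∀ m : M, u m = n • m := fun m => rfl
  have hueq : ∀ (γ : Γ) (m : M), u.symm (γ • m) = γ • u.symm m := by
    intro γ m
    apply u.injective
    rw [AddEquiv.apply_symm_apply, huν, smul_comm, ← huν, AddEquiv.apply_symm_apply]
  have hnu : ∀ m : M, n • u.symm m = m := by
    intro m
    rw [← huν, AddEquiv.apply_symm_apply]
  obtain ⟨h₀, hh₀⟩ := Module.projective_lifting_property g.toIntLinearMap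
      (u.symm.toAddMonoidHom.comp f).toIntLinearMap gsurj
  have hh₀' : ∀ x, g (h₀ x) = u.symm (f x) := by
    intro x
    have := LinearMap.congr_fun hh₀ x
    simpa using this
  set c : Γ → (L.carrier →+ B.carrier) := fun γ =>
    ((DistribMulAction.toAddMonoidHom B.carrier γ).comp h₀.toAddMonoidHom).comp
      (DistribMulAction.toAddMonoidHom L.carrier γ⁻¹) with hc
  set h : L.carrier →+ B.carrier := ∑ γ : Γ, c γ with hh
  have happ : ∀ x, h x = ∑ γ : Γ, γ • h₀ (γ⁻¹ • x) := by
    intro x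
    rw [hh, AddMonoidHom.finset_sum_apply]
    rfl
  refine ⟨h, ?_, ?_⟩
  · intro δ x
    rw [happ, happ, Finset.smul_sum]
    refine Fintype.sum_equiv (Equiv.mulLeft δ⁻¹) _ _ ?_
    intro γ
    show γ • h₀ (γ⁻¹ • δ • x) = δ • ((δ⁻¹ * γ) • h₀ ((δ⁻¹ * γ)⁻¹ • x))
    simp only [smul_smul, mul_inv_rev, inv_inv, mul_inv_cancel_left]
  · ext x
    rw [AddMonoidHom.comp_apply, happ, map_sum]
    have hterm : ∀ γ : Γ, g (γ • h₀ (γ⁻¹ • x)) = u.symm (f x) := by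
      intro γ
      rw [hg, hh₀', hf γ⁻¹ x, hueq, smul_inv_smul]
    rw [Finset.sum_congr rfl fun γ _ => hterm γ, Finset.sum_const, Finset.card_univ, ← hn,
      hnu]

/-- Roiter's version of Schanuel's lemma.  Let `Γ` be a finite group, `M` a finite
`Γ`-module with `|Γ| ⬝ M = M`.  Then (i) every surjective equivariant homomorphism from a
`Γ`-lattice onto `M` is projective in the sense of Roiter, and (ii) for any two short exact
sequences `0 → K → L → M → 0` and `0 → K' → L' → M → 0` of `Γ`-modules with `L, L'`
`Γ`-lattices, one has `L ⊕ K' ≅ L' ⊕ K` as `Γ`-lattices. -/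
theorem roiter_schanuel {Γ : Type u} [Group Γ] [Fintype Γ]
    (M : Type u) [AddCommGroup M] [DistribMulAction Γ M] [Finite M]
    (hM : ∀ m : M, ∃ m' : M, (Fintype.card Γ) • m' = m) :
    (∀ (L : GLat Γ) (f : L.carrier →+ M),
        (∀ (γ : Γ) (x : L.carrier), f (γ • x) = γ • f x) → Function.Surjective f →
          RoiterProjective L M f) ∧
    (∀ (K L K' L' : GLat Γ)
        (ι : K.carrier →+ L.carrier) (f : L.carrier →+ M)
        (ι' : K'.carrier →+ L'.carrier) (f' : L'.carrier →+ M),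
        GLat.Equivariant ι → GLat.Equivariant ι' →
        (∀ (γ : Γ) (x : L.carrier), f (γ • x) = γ • f x) →
        (∀ (γ : Γ) (x : L'.carrier), f' (γ • x) = γ • f' x) →
        Function.Injective ι → Function.Surjective f → f.ker = ι.range →
        Function.Injective ι' → Function.Surjective f' → f'.ker = ι'.range →
        ∃ e : (L.carrier × K'.carrier) ≃+ (L'.carrier × K.carrier),
          ∀ (γ : Γ) (x : L.carrier × K'.carrier), e (γ • x) = γ • e x) := by
  classical
  have part1 : ∀ (L : GLat Γ) (f : L.carrier →+ M),
      (∀ (γ : Γ) (x : L.carrier), f (γ • x) = γ • f x) → Function.Surjective f →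
        RoiterProjective L M f := fun L f hf hs => roiter_part1 M hM L f hf hs
  refine ⟨part1, ?_⟩
  intro K L K' L' ι f ι' f' hιeq hι'eq hfeq hf'eq hιinj hfsurj hker hι'inj hf'surj hker'
  obtain ⟨h, hheq, hhf⟩ := part1 L f hfeq hfsurj L' f' hf'eq hf'surj
  obtain ⟨h', hh'eq, hh'f⟩ := part1 L' f' hf'eq hf'surj L f hfeq hfsurj
  have hhf' : ∀ x, f' (h x) = f x := fun x => DFunLike.congr_fun hhf x
  have hh'f' : ∀ x, f (h' x) = f' x := fun x => DFunLike.congr_fun hh'f x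
  set ρ : (ι.range : AddSubgroup L.carrier) ≃+ K.carrier :=
    (AddMonoidHom.ofInjective hιinj).symm with hρ
  set ρ' : (ι'.range : AddSubgroup L'.carrier) ≃+ K'.carrier :=
    (AddMonoidHom.ofInjective hι'inj).symm with hρ'
  have hρ2 : ∀ (a : L.carrier) (pf : a ∈ ι.range), ι (ρ ⟨a, pf⟩) = a := fun a pf =>
    AddMonoidHom.apply_ofInjective_symm hιinj ⟨a, pf⟩
  have hρ'2 : ∀ (a : L'.carrier) (pf : a ∈ ι'.range), ι' (ρ' ⟨a, pf⟩) = a := fun a pf =>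
    AddMonoidHom.apply_ofInjective_symm hι'inj ⟨a, pf⟩
  have memA : ∀ (l : L.carrier) (k' : K'.carrier),
      l - h' (h l + ι' k') ∈ ι.range := by
    intro l k'
    rw [← hker, AddMonoidHom.mem_ker, map_sub, hh'f', map_add, hhf']
    have : f' (ι' k') = 0 := by
      rw [← AddMonoidHom.mem_ker, hker']
      exact ⟨k', rfl⟩
    rw [this]
    abel
  have memB : ∀ (l' : L'.carrier) (k : K.carrier),
      l' - h (h' l' + ι k) ∈ ι'.range := by
    intro l' k
    rw [← hker', AddMonoidHom.mem_ker, map_sub, hhf', map_add, hh'f']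
    have : f (ι k) = 0 := by
      rw [← AddMonoidHom.mem_ker, hker]
      exact ⟨k, rfl⟩
    rw [this]
    abel
  refine ⟨{ toFun := fun p => (h p.1 + ι' p.2, ρ ⟨p.1 - h' (h p.1 + ι' p.2), memA p.1 p.2⟩),
            invFun := fun q => (h' q.1 + ι q.2, ρ' ⟨q.1 - h (h' q.1 + ι q.2), memB q.1 q.2⟩),
            left_inv := ?_, right_inv := ?_, map_add' := ?_ }, ?_⟩
  · rintro ⟨l, k'⟩
    have e1 : h' (h l + ι' k') + ι (ρ ⟨l - h' (h l + ι' k'), memA l k'⟩) = l := by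
      rw [hρ2]; abel
    refine Prod.ext e1 ?_
    apply hι'inj
    simp only
    rw [hρ'2, e1]
    abel
  · rintro ⟨l', k⟩
    have e1 : h (h' l' + ι k) + ι' (ρ' ⟨l' - h (h' l' + ι k), memB l' k⟩) = l' := by
      rw [hρ'2]; abel
    refine Prod.ext e1 ?_
    apply hιinj
    simp only
    rw [hρ2, e1]
    abel
  · rintro ⟨l₁, k₁⟩ ⟨l₂, k₂⟩
    refine Prod.ext ?_ ?_
    · simp only [Prod.fst_add, Prod.snd_add, map_add]
      abel
    · apply hιinj
      simp only [Prod.fst_add, Prod.snd_add, map_add, hρ2]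
      abel
  · rintro γ ⟨l, k'⟩
    have hsm : γ • (l, k') = (γ • l, γ • k') := rfl
    refine Prod.ext ?_ ?_
    · show h (γ • l) + ι' (γ • k') = γ • (h l + ι' k')
      rw [hheq, hι'eq, smul_add]
    · show ρ ⟨γ • l - h' (h (γ • l) + ι' (γ • k')), _⟩ =
        γ • ρ ⟨l - h' (h l + ι' k'), memA l k'⟩
      apply hιinj
      rw [hρ2, hιeq, hρ2, hheq, hι'eq, ← smul_add, hh'eq, smul_sub]
end

section
/- Let Γ = ℤ/pℤ × ℤ/pℤ for a prime p. Then the Γ-lattice J_Γ (cokernel of the norm map ℤ → ℤ[Γ]) is not quasi-invertible; in particular it is not quasi-permutation and is not a direct summand of any quasi-permutation Γ-lattice. -/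
universe u

open scoped BigOperators

open Finset

lemma perm_apply_inv_self {ι : Type*} (e : Equiv.Perm ι) (i : ι) : e (e⁻¹ i) = i :=
  e.apply_symm_apply i

lemma perm_inv_apply_self {ι : Type*} (e : Equiv.Perm ι) (i : ι) : e⁻¹ (e i) = i :=
  e.symm_apply_apply i

section SumShift
variable {A : Type*} [AddCommGroup A]

lemma shift_one_sum (H : ℕ → A) (m : ℕ) (hH : H m = H 0) :
    ∑ l ∈ Finset.range m, H (l + 1) = ∑ l ∈ Finset.range m, H l := by
  have h1 := Finset.sum_range_succ' H m
  have h2 := Finset.sum_range_succ H m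
  rw [h2, hH] at h1
  exact add_right_cancel h1.symm

lemma periodic_shift_sum (h : ℕ → A) (m : ℕ)
    (hper : ∀ l, h (l + m) = h l) (k : ℕ) :
    ∑ l ∈ Finset.range m, h (k + l) = ∑ l ∈ Finset.range m, h l := by
  induction k with
  | zero => simp
  | succ k ih =>
      have : ∑ l ∈ Finset.range m, h (k + 1 + l) = ∑ l ∈ Finset.range m, h (k + l) := by
        have := shift_one_sum (fun l => h (k + l)) m (by simpa using hper k)
        simpa [add_assoc, add_comm 1] using this
      rw [this, ih]
end SumShift

section PermMod

variable {G : Type*} [Group G] {ι : Type*} [Fintype ι] {A : Type*} [AddCommGroup A]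
  [DistribMulAction G A]

lemma smul_zsmul' (γ : G) (m : ℤ) (x : A) : γ • (m • x) = m • (γ • x) :=
  map_zsmul (DistribMulAction.toAddMonoidHom A γ) m x

variable (b : Module.Basis ι ℤ A) (σ : G → Equiv.Perm ι) (hσ : ∀ γ i, γ • b i = b (σ γ i))

lemma repr_sum_smul (c : ι → ℤ) (j : ι) : b.repr (∑ i, c i • b i) j = c j := by
  classical
  have : b.repr (∑ i, c i • b i) = ∑ i, c i • b.repr (b i) := by
    rw [map_sum]
    simp
  rw [this]
  rw [Finsupp.finset_sum_apply]
  simp only [Module.Basis.repr_self, Finsupp.smul_apply, Finsupp.single_apply, smul_eq_mul]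
  rw [Finset.sum_congr rfl (fun i _ => by rw [mul_ite, mul_one, mul_zero])]
  simp [Finset.sum_ite_eq' Finset.univ j c]

include hσ in
lemma repr_smul' (γ : G) (v : A) (j : ι) :
    b.repr (γ • v) j = b.repr v ((σ γ)⁻¹ j) := by
  have h1 : γ • v = ∑ i, b.repr v i • b (σ γ i) := by
    conv_lhs => rw [← b.sum_repr v]
    rw [show γ • ∑ i : ι, (b.repr v) i • b i
        = (DistribMulAction.toAddMonoidHom A γ) (∑ i : ι, (b.repr v) i • b i) from rfl,
      map_sum]
    refine Finset.sum_congr rfl (fun i _ => ?_)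
    show γ • (b.repr v i • b i) = _
    rw [smul_zsmul', hσ]
  rw [h1]
  have h2 : ∑ i, b.repr v i • b (σ γ i) = ∑ i, b.repr v ((σ γ)⁻¹ i) • b i := by
    refine Fintype.sum_equiv (σ γ) _ _ (fun i => by simp)
  rw [h2, repr_sum_smul]

end PermMod

open Finset

section PermMod2

variable {G : Type*} [Group G] {ι : Type*} [Fintype ι] {A : Type*} [AddCommGroup A]
  [DistribMulAction G A]
  (b : Module.Basis ι ℤ A) (σ : G → Equiv.Perm ι) (hσ : ∀ γ i, γ • b i = b (σ γ i))

include hσ in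
lemma solve_from_sum (m : ℕ) (hm : 0 < m) (S : A) (Y : G → A) (T : G → Prop)
    (hkey : ∀ δ, T δ → (m : ℤ) • Y δ = S - δ • S) :
    ∃ w, ∀ δ, T δ → Y δ = δ • w - w := by
  classical
  set z : A := ∑ i, (b.repr S i / (m : ℤ)) • b i with hz
  refine ⟨-z, fun δ hδ => ?_⟩
  have hco : ∀ i, (m : ℤ) * b.repr (Y δ) i = b.repr S i - b.repr S ((σ δ)⁻¹ i) := by
    intro i
    have := congrArg (fun v => b.repr v i) (hkey δ hδ)
    simpa [map_zsmul, smul_eq_mul, repr_smul' b σ hσ, map_sub] using this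
  have hmod : ∀ i, b.repr S ((σ δ)⁻¹ i) % (m : ℤ) = b.repr S i % (m : ℤ) := by
    intro i
    have hdvd : (m : ℤ) ∣ b.repr S i - b.repr S ((σ δ)⁻¹ i) := ⟨_, (hco i).symm⟩
    exact Int.modEq_iff_dvd.mpr hdvd
  apply b.ext_elem
  intro i
  have hzc : ∀ j, b.repr z j = b.repr S j / (m : ℤ) := fun j => repr_sum_smul b _ j
  have h2 : b.repr (δ • -z - -z) i = b.repr S i / (m : ℤ) - b.repr S ((σ δ)⁻¹ i) / (m : ℤ) := by
    rw [map_sub, Finsupp.sub_apply, repr_smul' b σ hσ, map_neg]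
    rw [Finsupp.neg_apply, Finsupp.neg_apply, hzc, hzc]
    ring
  rw [h2]
  have hdec : ∀ j, b.repr S j = b.repr S j % (m : ℤ) + (m : ℤ) * (b.repr S j / (m : ℤ)) :=
    fun j => (Int.emod_add_mul_ediv _ _).symm
  have hm' : (m : ℤ) ≠ 0 := by exact_mod_cast hm.ne'
  apply mul_left_cancel₀ hm'
  rw [hco i]
  nth_rewrite 1 [hdec i]
  nth_rewrite 1 [hdec ((σ δ)⁻¹ i)]
  rw [hmod i]
  ring

include hσ in
/-- H¹ of a finite group with coefficients in a permutation lattice vanishes. -/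
lemma h1_perm [Fintype G] (x : G → A) (hx : ∀ α β, x (α * β) = x α + α • x β) :
    ∃ w, ∀ γ, x γ = γ • w - w := by
  classical
  set S : A := ∑ γ : G, x γ with hS
  have key : ∀ δ : G, (Fintype.card G : ℤ) • x δ = S - δ • S := by
    intro δ
    have h1 : ∑ γ : G, x (δ * γ) = S := Fintype.sum_equiv (Equiv.mulLeft δ) _ _ (fun γ => rfl)
    have h2 : ∑ γ : G, x (δ * γ) = Fintype.card G • x δ + δ • S := by
      rw [Finset.sum_congr rfl (fun γ _ => hx δ γ), Finset.sum_add_distrib,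
        Finset.sum_const, Finset.card_univ, ← Finset.smul_sum]
    rw [natCast_zsmul]
    rw [h1] at h2
    rw [eq_sub_iff_add_eq, ← h2]
  obtain ⟨w, hw⟩ := solve_from_sum b σ hσ (Fintype.card G) Fintype.card_pos S x
    (fun _ => True) (fun δ _ => key δ)
  exact ⟨w, fun γ => hw γ trivial⟩

include hσ in
/-- H¹ of a cyclic subgroup (given by powers of `γ₀`) with permutation coefficients vanishes. -/
lemma h1_cyclic (γ₀ : G) (m : ℕ) (hm : 0 < m) (h1 : γ₀ ^ m = 1) (Y : G → A)
    (hY : ∀ k l : ℕ, Y (γ₀ ^ k * γ₀ ^ l) = Y (γ₀ ^ k) + γ₀ ^ k • Y (γ₀ ^ l)) :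
    ∃ w, ∀ k : ℕ, Y (γ₀ ^ k) = γ₀ ^ k • w - w := by
  classical
  set S : A := ∑ l ∈ Finset.range m, Y (γ₀ ^ l) with hS
  have key : ∀ k : ℕ, (m : ℤ) • Y (γ₀ ^ k) = S - γ₀ ^ k • S := by
    intro k
    have hper : ∀ l, Y (γ₀ ^ (l + m)) = Y (γ₀ ^ l) := by
      intro l; rw [pow_add, h1, mul_one]
    have h1' : ∑ l ∈ Finset.range m, Y (γ₀ ^ (k + l)) = S :=
      periodic_shift_sum (fun l => Y (γ₀ ^ l)) m hper k
    have h2 : ∑ l ∈ Finset.range m, Y (γ₀ ^ (k + l)) = m • Y (γ₀ ^ k) + γ₀ ^ k • S := by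
      rw [Finset.sum_congr rfl (fun l _ => by rw [pow_add, hY k l]),
        Finset.sum_add_distrib, Finset.sum_const, Finset.card_range, ← Finset.smul_sum]
    rw [natCast_zsmul]
    rw [h1'] at h2
    rw [eq_sub_iff_add_eq, ← h2]
  obtain ⟨w, hw⟩ := solve_from_sum b σ hσ m hm S Y (fun δ => ∃ k : ℕ, γ₀ ^ k = δ)
    (fun δ ⟨k, hk⟩ => hk ▸ key k)
  exact ⟨w, fun k => hw _ ⟨k, rfl⟩⟩

end PermMod2

open Finset

section ShaOne

variable {G : Type*} [Group G] {ι : Type*} [Fintype ι] {A : Type*} [AddCommGroup A]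
  [DistribMulAction G A]
  (b : Module.Basis ι ℤ A) (σ : G → Equiv.Perm ι) (hσ : ∀ γ i, γ • b i = b (σ γ i))

include hσ in
lemma sigma_mul' (α β : G) (i : ι) : σ (α * β) i = σ α (σ β i) :=
  b.injective (by rw [← hσ, ← hσ, ← hσ, mul_smul])

include hσ in
lemma exists_zsmul_of_dvd_coords (n : ℤ) (v : A) (hdvd : ∀ i, n ∣ b.repr v i) :
    ∃ a, v = n • a := by
  classical
  refine ⟨∑ i, (b.repr v i / n) • b i, ?_⟩
  apply b.ext_elem
  intro i
  rw [map_zsmul, Finsupp.smul_apply, repr_sum_smul, smul_eq_mul,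
    Int.mul_ediv_cancel' (hdvd i)]

include hσ in
/-- Ш¹ of any group with coefficients in a permutation module "mod n" vanishes. -/
lemma sha_one (n : ℤ) (x : G → A)
    (hx : ∀ α β, ∃ a, x (α * β) = x α + α • x β + n • a)
    (hloc : ∀ γ, ∃ w a, x γ = (γ • w - w) + n • a) :
    ∃ w, ∀ γ, ∃ a, x γ = (γ • w - w) + n • a := by
  classical
  have hσ1 : ∀ i : ι, σ 1 i = i := fun i => b.injective (by rw [← hσ, one_smul])
  have hσinv : ∀ (γ : G) (i : ι), σ γ⁻¹ i = (σ γ)⁻¹ i := by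
    intro γ i
    apply (σ γ).injective
    rw [← sigma_mul' b σ hσ, mul_inv_cancel, hσ1, perm_apply_inv_self]
  -- Claim 1
  have claim1 : ∀ (γ : G) (i : ι), σ γ i = i → n ∣ b.repr (x γ) i := by
    intro γ i hfix
    obtain ⟨w, a, ha⟩ := hloc γ
    have h1 : (σ γ)⁻¹ i = i := (σ γ).injective (by rw [perm_apply_inv_self, hfix])
    have h2 := congrArg (fun v => b.repr v i) ha
    simp only [map_add, map_sub, Finsupp.add_apply, Finsupp.sub_apply, map_zsmul,
      Finsupp.smul_apply, smul_eq_mul, repr_smul' b σ hσ, h1] at h2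
    rw [h2]
    simp
  -- Claim 2
  have claim2 : ∀ (α β : G) (i₀ i : ι), σ α i₀ = i → σ β i₀ = i →
      n ∣ b.repr (x α) i - b.repr (x β) i := by
    intro α β i₀ i hα hβ
    obtain ⟨a, ha⟩ := hx β (β⁻¹ * α)
    rw [mul_inv_cancel_left] at ha
    have hβinv : (σ β)⁻¹ i = i₀ := (σ β).injective (by rw [perm_apply_inv_self, hβ])
    have hfix : σ (β⁻¹ * α) i₀ = i₀ := by
      rw [sigma_mul' b σ hσ, hα]
      apply (σ β).injective
      rw [← sigma_mul' b σ hσ, mul_inv_cancel, hβ]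
      exact b.injective (by rw [← hσ, one_smul])
    have h2 := congrArg (fun v => b.repr v i) ha
    simp only [map_add, Finsupp.add_apply, map_zsmul, Finsupp.smul_apply, smul_eq_mul,
      repr_smul' b σ hσ, hβinv] at h2
    -- h2 : repr (x α) i = repr (x β) i + repr (x (β⁻¹ * α)) i₀ + n * repr a i
    rw [h2]
    have := claim1 (β⁻¹ * α) i₀ hfix
    have h3 : b.repr (x β) i + b.repr (x (β⁻¹ * α)) i₀ + n * b.repr a i - b.repr (x β) i
        = b.repr (x (β⁻¹ * α)) i₀ + n * b.repr a i := by ring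
    rw [h3]
    exact dvd_add this ⟨_, rfl⟩
  -- orbit representatives
  letI s : Setoid ι := ⟨fun i j => ∃ γ, σ γ j = i, by
    constructor
    · exact fun i => ⟨1, hσ1 i⟩
    · rintro i j ⟨γ, rfl⟩
      exact ⟨γ⁻¹, by rw [hσinv, perm_inv_apply_self]⟩
    · rintro i j k ⟨γ, hγ⟩ ⟨δ, hδ⟩
      exact ⟨γ * δ, by rw [sigma_mul' b σ hσ, hδ, hγ]⟩⟩
  set rep : ι → ι := fun i => (Quotient.mk s i).out with hrepdef
  have hrep1 : ∀ i, ∃ γ, σ γ (rep i) = i := fun i => Setoid.symm (Quotient.mk_out i)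
  set τ : ι → G := fun i => (hrep1 i).choose with hτdef
  have hτ : ∀ i, σ (τ i) (rep i) = i := fun i => (hrep1 i).choose_spec
  have hrepeq : ∀ (γ : G) (i : ι), rep ((σ γ)⁻¹ i) = rep i := by
    intro γ i
    have : ((σ γ)⁻¹ i) ≈ i := ⟨γ⁻¹, (hσinv γ i)⟩
    exact congrArg Quotient.out (Quotient.sound this)
  set w : A := ∑ i, (-(b.repr (x (τ i)) i)) • b i with hwdef
  have hwc : ∀ i, b.repr w i = -(b.repr (x (τ i)) i) := fun i => repr_sum_smul b _ i
  -- main divisibility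
  have main : ∀ (γ : G) (i : ι),
      n ∣ b.repr (x γ) i - (b.repr w ((σ γ)⁻¹ i) - b.repr w i) := by
    intro γ i
    set j := (σ γ)⁻¹ i with hj
    have hji : σ γ j = i := perm_apply_inv_self (σ γ) i
    have hrepji : rep j = rep i := hrepeq γ i
    have hτj : σ (τ j) (rep i) = j := by rw [← hrepji]; exact hτ j
    have hcomp : σ (γ * τ j) (rep i) = i := by rw [sigma_mul' b σ hσ, hτj, hji]
    obtain ⟨a, ha⟩ := hx γ (τ j)
    have h2 := congrArg (fun v => b.repr v i) ha
    simp only [map_add, Finsupp.add_apply, map_zsmul, Finsupp.smul_apply, smul_eq_mul,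
      repr_smul' b σ hσ, ← hj] at h2
    -- h2 : repr (x (γ * τ j)) i = repr (x γ) i + repr (x (τ j)) j + n * repr a i
    have h3 := claim2 (γ * τ j) (τ i) (rep i) i hcomp (hτ i)
    rw [h2] at h3
    rw [hwc, hwc]
    have h4 : b.repr (x γ) i - (-(b.repr (x (τ j)) j) - -(b.repr (x (τ i)) i))
        = (b.repr (x γ) i + b.repr (x (τ j)) j + n * b.repr a i - b.repr (x (τ i)) i)
          - n * b.repr a i := by ring
    rw [h4]
    exact dvd_sub h3 ⟨_, rfl⟩
  refine ⟨w, fun γ => ?_⟩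
  obtain ⟨a, ha⟩ := exists_zsmul_of_dvd_coords b σ hσ n (x γ - (γ • w - w)) (fun i => by
    have := main γ i
    rw [map_sub, map_sub, Finsupp.sub_apply, Finsupp.sub_apply, repr_smul' b σ hσ]
    exact this)
  exact ⟨a, by rw [← ha]; abel⟩

end ShaOne

open Finset

section ShaTwo

variable {G : Type*} [Group G] [Fintype G] {ι : Type*} [Fintype ι] {A : Type*}
  [AddCommGroup A] [DistribMulAction G A]
  (b : Module.Basis ι ℤ A) (σ : G → Equiv.Perm ι) (hσ : ∀ γ i, γ • b i = b (σ γ i))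

include hσ in
/-- Ш² of a finite group with coefficients in a permutation lattice vanishes:
a 2-cocycle whose restriction to every cyclic subgroup is a coboundary is a coboundary. -/
lemma sha_two (c : G → G → A)
    (hc : ∀ α β γ, α • c β γ + c α (β * γ) = c (α * β) γ + c α β)
    (hsha : ∀ γ₀ : G, ∃ u : G → A, ∀ k l : ℕ,
      c (γ₀ ^ k) (γ₀ ^ l) = γ₀ ^ k • u (γ₀ ^ l) - u (γ₀ ^ k * γ₀ ^ l) + u (γ₀ ^ k)) :
    ∃ v : G → A, ∀ α β, c α β = α • v β - v (α * β) + v α := by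
  classical
  set n : ℕ := Fintype.card G with hn
  have hnpos : 0 < n := Fintype.card_pos
  have hnz : (n : ℤ) ≠ 0 := by exact_mod_cast hnpos.ne'
  set x : G → A := fun α => ∑ β : G, c α β with hx
  have key1 : ∀ α β, x (α * β) + (n : ℤ) • c α β = x α + α • x β := by
    intro α β
    have h1 : ∑ γ : G, (α • c β γ) = α • x β := (Finset.smul_sum).symm
    have h2 : ∑ γ : G, c α (β * γ) = x α :=
      Fintype.sum_equiv (Equiv.mulLeft β) _ _ (fun γ => rfl)
    have h3 : ∑ γ : G, c (α * β) γ = x (α * β) := rfl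
    have h4 : ∑ γ : G, c α β = n • c α β := by
      rw [Finset.sum_const, Finset.card_univ]
    have := Finset.sum_congr rfl (fun γ (_ : γ ∈ Finset.univ) => hc α β γ)
    rw [Finset.sum_add_distrib, Finset.sum_add_distrib, h1, h2, h3, h4] at this
    rw [natCast_zsmul, ← this]
    abel
  have cancel : ∀ v v' : A, (n : ℤ) • v = (n : ℤ) • v' → v = v' := by
    intro v v' h
    apply b.ext_elem
    intro i
    have := congrArg (fun t => b.repr t i) h
    simp only [map_zsmul, Finsupp.smul_apply, smul_eq_mul] at this
    exact mul_left_cancel₀ hnz this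
  -- local condition for sha_one
  have hloc : ∀ γ₀ : G, ∃ w a, x γ₀ = (γ₀ • w - w) + (n : ℤ) • a := by
    intro γ₀
    obtain ⟨u, hu⟩ := hsha γ₀
    set Y : G → A := fun δ => x δ - (n : ℤ) • u δ with hY
    have hYc : ∀ k l : ℕ, Y (γ₀ ^ k * γ₀ ^ l) = Y (γ₀ ^ k) + γ₀ ^ k • Y (γ₀ ^ l) := by
      intro k l
      have e1 : x (γ₀ ^ k * γ₀ ^ l)
          = x (γ₀ ^ k) + γ₀ ^ k • x (γ₀ ^ l) - (n : ℤ) • c (γ₀ ^ k) (γ₀ ^ l) := by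
        rw [← key1 (γ₀ ^ k) (γ₀ ^ l)]; abel
      simp only [hY]
      rw [e1, hu k l, smul_sub (γ₀ ^ k), smul_zsmul']
      rw [smul_add (n : ℤ), smul_sub (n : ℤ)]
      abel
    obtain ⟨w, hw⟩ := h1_cyclic b σ hσ γ₀ n hnpos (pow_card_eq_one) Y hYc
    refine ⟨w, u γ₀, ?_⟩
    have := hw 1
    rw [pow_one] at this
    simp only [hY] at this
    rw [← this]
    abel
  have hx' : ∀ α β, ∃ a, x (α * β) = x α + α • x β + (n : ℤ) • a := by
    intro α β
    refine ⟨-c α β, ?_⟩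
    have e1 : x (α * β) = x α + α • x β - (n : ℤ) • c α β := by
      rw [← key1 α β]; abel
    rw [e1, smul_neg]
    abel
  obtain ⟨w, hw⟩ := sha_one b σ hσ (n : ℤ) x hx' hloc
  set z : G → A := fun γ => (hw γ).choose with hz
  have hzs : ∀ γ, x γ = (γ • w - w) + (n : ℤ) • z γ := fun γ => (hw γ).choose_spec
  refine ⟨z, fun α β => ?_⟩
  apply cancel
  have e2 : (n : ℤ) • c α β = x α + α • x β - x (α * β) := by
    rw [← key1 α β]; abel
  rw [e2, hzs α, hzs β, hzs (α * β)]
  have h2 : α • (β • w - w + (n : ℤ) • z β)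
      = α • (β • w) - α • w + (n : ℤ) • (α • z β) := by
    rw [smul_add, smul_sub, smul_zsmul']
  rw [h2, ← mul_smul]
  rw [smul_add (n : ℤ), smul_sub (n : ℤ)]
  abel
end ShaTwo

section Chase

variable {G : Type*} [Group G] [Fintype G]
    {AL AP AP' : Type*} [AddCommGroup AL] [AddCommGroup AP] [AddCommGroup AP']
    [DistribMulAction G AL] [DistribMulAction G AP] [DistribMulAction G AP']
    {ιP ιP' : Type*} [Fintype ιP] [Fintype ιP']

/-- The two-step diagram chase: if `0 → AP' → AP → AL` is exact with `AP, AP'` permutation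
modules, then every 1-cocycle on `AL` whose restriction to every cyclic subgroup is a
coboundary is itself a coboundary. -/
lemma chase (bP : Module.Basis ιP ℤ AP) (σP : G → Equiv.Perm ιP)
    (hσP : ∀ γ i, γ • bP i = bP (σP γ i))
    (bP' : Module.Basis ιP' ℤ AP') (σP' : G → Equiv.Perm ιP')
    (hσP' : ∀ γ i, γ • bP' i = bP' (σP' γ i))
    (F : AP →+ AL) (Gm : AP' →+ AP)
    (hFsurj : Function.Surjective F) (hGinj : Function.Injective Gm)
    (hFG : ∀ χ, F (Gm χ) = 0)
    (hexact : ∀ ψ, F ψ = 0 → ∃ χ, Gm χ = ψ)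
    (hFe : ∀ (γ : G) ψ, F (γ • ψ) = γ • F ψ) (hGe : ∀ (γ : G) χ, Gm (γ • χ) = γ • Gm χ)
    (ξ : G → AL) (hξ : ∀ γ δ, ξ (γ * δ) = ξ γ + γ • ξ δ)
    (hsha : ∀ γ₀ : G, ∃ u, ∀ k : ℕ, ξ (γ₀ ^ k) = γ₀ ^ k • u - u) :
    ∃ w, ∀ γ, ξ γ = γ • w - w := by
  classical
  set η : G → AP := fun γ => Function.surjInv hFsurj (ξ γ) with hη
  have hηF : ∀ γ, F (η γ) = ξ γ := fun γ => Function.surjInv_eq hFsurj _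
  set dη : G → G → AP := fun γ δ => γ • η δ - η (γ * δ) + η γ with hdη
  have hFdη : ∀ γ δ, F (dη γ δ) = 0 := by
    intro γ δ
    simp only [hdη, map_add, map_sub, hFe, hηF]
    rw [hξ γ δ]
    abel
  set c : G → G → AP' := fun γ δ => (hexact _ (hFdη γ δ)).choose with hcdef
  have hcGm : ∀ γ δ, Gm (c γ δ) = dη γ δ := fun γ δ => (hexact _ (hFdη γ δ)).choose_spec
  have hccoc : ∀ α β γ, α • c β γ + c α (β * γ) = c (α * β) γ + c α β := by
    intro α β γ
    apply hGinj
    simp only [map_add, hGe, hcGm, hdη]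
    simp only [smul_add, smul_sub, ← mul_smul, ← mul_assoc]
    abel
  have hcsha : ∀ γ₀ : G, ∃ v : G → AP', ∀ k l : ℕ,
      c (γ₀ ^ k) (γ₀ ^ l) = γ₀ ^ k • v (γ₀ ^ l) - v (γ₀ ^ k * γ₀ ^ l) + v (γ₀ ^ k) := by
    intro γ₀
    obtain ⟨u, hu⟩ := hsha γ₀
    set ub : AP := Function.surjInv hFsurj u with hubdef
    have hub : F ub = u := Function.surjInv_eq hFsurj u
    have hκ : ∀ k : ℕ, F (η (γ₀ ^ k) - (γ₀ ^ k • ub - ub)) = 0 := by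
      intro k
      simp only [map_sub, hFe, hηF, hub, hu k]
      abel
    set v : G → AP' := fun δ => if h : F (η δ - (δ • ub - ub)) = 0
        then (hexact _ h).choose else 0 with hvdef
    have hvGm : ∀ k : ℕ, Gm (v (γ₀ ^ k)) = η (γ₀ ^ k) - (γ₀ ^ k • ub - ub) := by
      intro k
      simp only [hvdef, dif_pos (hκ k)]
      exact (hexact _ (hκ k)).choose_spec
    refine ⟨v, fun k l => ?_⟩
    apply hGinj
    have hkl : Gm (v (γ₀ ^ k * γ₀ ^ l)) = η (γ₀ ^ k * γ₀ ^ l)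
        - ((γ₀ ^ k * γ₀ ^ l) • ub - ub) := by
      rw [← pow_add]
      exact hvGm (k + l)
    rw [hcGm, map_add, map_sub, hGe, hvGm, hvGm, hkl, hdη]
    rw [smul_sub, smul_sub, ← mul_smul]
    abel
  obtain ⟨V, hV⟩ := sha_two bP' σP' hσP' c hccoc hcsha
  set η' : G → AP := fun γ => η γ - Gm (V γ) with hη'def
  have hη'c : ∀ γ δ, η' (γ * δ) = η' γ + γ • η' δ := by
    intro γ δ
    have h1 : Gm (c γ δ) = γ • Gm (V δ) - Gm (V (γ * δ)) + Gm (V γ) := by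
      rw [hV γ δ, map_add, map_sub, hGe]
    rw [hcGm, hdη] at h1
    simp only [hη'def]
    rw [smul_sub]
    have h2 : η (γ * δ) - Gm (V (γ * δ))
        = (γ • η δ + η γ - (γ • Gm (V δ) + Gm (V γ))) := by
      apply eq_of_sub_eq_zero
      have h3 : η (γ * δ) - Gm (V (γ * δ)) - (γ • η δ + η γ - (γ • Gm (V δ) + Gm (V γ)))
          = (γ • Gm (V δ) - Gm (V (γ * δ)) + Gm (V γ)) - (γ • η δ - η (γ * δ) + η γ) := by
        abel
      rw [h3, ← h1, sub_self]
    rw [h2]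
    abel
  obtain ⟨w', hw'⟩ := h1_perm bP σP hσP η' hη'c
  refine ⟨F w', fun γ => ?_⟩
  calc ξ γ = F (η γ) := (hηF γ).symm
    _ = F (η' γ + Gm (V γ)) := by simp only [hη'def]; congr 1; abel
    _ = F (η' γ) + F (Gm (V γ)) := by rw [map_add]
    _ = F (γ • w' - w') + 0 := by rw [hFG, hw' γ]
    _ = γ • F w' - F w' := by rw [add_zero, map_sub, hFe]

end Chase

section DualMod

def DualM (L : Type*) [AddCommGroup L] : Type _ := L →+ ℤ

namespace DualM

variable {L : Type*} [AddCommGroup L]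

instance : FunLike (DualM L) L ℤ := inferInstanceAs (FunLike (L →+ ℤ) L ℤ)
instance : AddMonoidHomClass (DualM L) L ℤ := inferInstanceAs (AddMonoidHomClass (L →+ ℤ) L ℤ)
instance : AddCommGroup (DualM L) := inferInstanceAs (AddCommGroup (L →+ ℤ))

def mk' (f : L →+ ℤ) : DualM L := f

@[simp] lemma mk'_apply (f : L →+ ℤ) (a : L) : (mk' f) a = f a := rfl

/-- Evaluation at a point, as an additive map. -/
def evalHom (a : L) : DualM L →+ ℤ :=
  AddMonoidHom.mk' (fun ψ => ψ a) (fun _ _ => rfl)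

@[simp] lemma evalHom_apply (a : L) (ψ : DualM L) : evalHom a ψ = ψ a := rfl

variable {G : Type*} [Group G] [DistribMulAction G L]

instance : DistribMulAction G (DualM L) where
  smul γ ψ := mk' (((ψ : L →+ ℤ)).comp (DistribMulAction.toAddMonoidHom L γ⁻¹))
  one_smul ψ := DFunLike.ext _ _ fun a => by
    show ψ ((1:G)⁻¹ • a) = ψ a
    rw [inv_one, one_smul]
  mul_smul γ δ ψ := DFunLike.ext _ _ fun a => by
    show ψ ((γ * δ)⁻¹ • a) = ψ (δ⁻¹ • γ⁻¹ • a)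
    rw [mul_inv_rev, mul_smul]
  smul_zero γ := rfl
  smul_add γ ψ χ := rfl

@[simp] lemma smul_apply (γ : G) (ψ : DualM L) (a : L) : (γ • ψ) a = ψ (γ⁻¹ • a) := rfl

variable {ι : Type*} [Fintype ι]

noncomputable def coordHom (b : Module.Basis ι ℤ L) (i : ι) : DualM L := mk' ((b.coord i).toAddMonoidHom)

@[simp] lemma coordHom_apply (b : Module.Basis ι ℤ L) (i : ι) (v : L) :
    coordHom b i v = b.repr v i := by
  show b.coord i v = b.repr v i
  rw [Module.Basis.coord_apply]

noncomputable def dualEquivFun (b : Module.Basis ι ℤ L) : DualM L ≃ₗ[ℤ] (ι → ℤ) where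
  toFun ψ i := ψ (b i)
  map_add' ψ χ := funext fun i => map_add (evalHom (b i)) ψ χ
  map_smul' n ψ := funext fun i => map_zsmul (evalHom (b i)) n ψ
  invFun c := ∑ i, c i • coordHom b i
  left_inv ψ := by
    classical
    apply DFunLike.ext
    intro v
    have h1 : (∑ i, (ψ (b i)) • coordHom b i) v = ∑ i, (ψ (b i)) * b.repr v i := by
      rw [show (∑ i, (ψ (b i)) • coordHom b i) v
          = evalHom v (∑ i, (ψ (b i)) • coordHom b i) from rfl, map_sum]
      refine Finset.sum_congr rfl fun i _ => ?_
      rw [map_zsmul, evalHom_apply, coordHom_apply, smul_eq_mul]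
    have h2 : ψ v = ∑ i, b.repr v i * ψ (b i) := by
      conv_lhs => rw [← b.sum_repr v]
      rw [map_sum]
      exact Finset.sum_congr rfl fun i _ => by rw [map_zsmul, smul_eq_mul]
    rw [h1, h2]
    exact Finset.sum_congr rfl fun i _ => mul_comm _ _
  right_inv c := by
    classical
    funext i
    show (∑ j, c j • coordHom b j) (b i) = c i
    rw [show (∑ j, c j • coordHom b j) (b i) = evalHom (b i) (∑ j, c j • coordHom b j)
      from rfl, map_sum]
    have : ∀ j, evalHom (b i) (c j • coordHom b j) = c j * (if i = j then 1 else 0) := by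
      intro j
      rw [map_zsmul, evalHom_apply, coordHom_apply, Module.Basis.repr_self, smul_eq_mul,
        Finsupp.single_apply]
    rw [Finset.sum_congr rfl fun j _ => this j]
    simp [mul_ite, Finset.sum_ite_eq Finset.univ i c]

noncomputable def dualBasis (b : Module.Basis ι ℤ L) : Module.Basis ι ℤ (DualM L) := Module.Basis.ofEquivFun (dualEquivFun b)

lemma dualBasis_apply [DecidableEq ι] (b : Module.Basis ι ℤ L) (i k : ι) :
    dualBasis b i (b k) = if i = k then 1 else 0 := by
  calc dualBasis b i (b k)
      = (dualBasis b).repr (dualBasis b i) k :=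
        (Module.Basis.ofEquivFun_repr_apply (dualEquivFun b) (dualBasis b i) k).symm
    _ = (Finsupp.single i (1 : ℤ)) k := by rw [Module.Basis.repr_self]
    _ = if i = k then 1 else 0 := Finsupp.single_apply

lemma dualBasis_perm (b : Module.Basis ι ℤ L) (σ : G → Equiv.Perm ι)
    (hσ : ∀ γ i, γ • b i = b (σ γ i)) (γ : G) (i : ι) :
    γ • dualBasis b i = dualBasis b (σ γ i) := by
  classical
  apply (dualBasis b).ext_elem
  intro j
  have e1 : ((dualBasis b).repr (γ • dualBasis b i)) j = (γ • dualBasis b i) (b j) :=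
    Module.Basis.ofEquivFun_repr_apply (dualEquivFun b) _ j
  have e2 : ((dualBasis b).repr (dualBasis b (σ γ i))) j = (dualBasis b (σ γ i)) (b j) :=
    Module.Basis.ofEquivFun_repr_apply (dualEquivFun b) _ j
  rw [e1, e2, smul_apply]
  have hσ1 : ∀ k : ι, σ 1 k = k := fun k => b.injective (by rw [← hσ, one_smul])
  have hinv : γ⁻¹ • b j = b ((σ γ)⁻¹ j) := by
    rw [hσ γ⁻¹ j]
    congr 1
    apply (σ γ).injective
    rw [perm_apply_inv_self, ← sigma_mul' b σ hσ, mul_inv_cancel, hσ1]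
  rw [hinv, dualBasis_apply, dualBasis_apply]
  congr 1
  rw [show ((σ γ)⁻¹ j) = (σ γ).symm j from rfl]
  rw [Equiv.eq_symm_apply]


def toHom {L : Type*} [AddCommGroup L] (ψ : DualM L) : L →+ ℤ := ψ

/-- Precomposition with an additive map, as a map of duals. -/
def compHom {L L' : Type*} [AddCommGroup L] [AddCommGroup L'] (f : L' →+ L) :
    DualM L →+ DualM L' :=
  AddMonoidHom.mk' (fun ψ => mk' ((toHom ψ).comp f)) (fun ψ χ => rfl)

@[simp] lemma compHom_apply {L L' : Type*} [AddCommGroup L] [AddCommGroup L']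
    (f : L' →+ L) (ψ : DualM L) (a : L') : compHom f ψ a = ψ (f a) := rfl

end DualM
end DualMod

open Finset

section MainAux

variable (p : ℕ) [Fact p.Prime]

local notation "Γ" => Multiplicative (ZMod p × ZMod p)

lemma gamma_exp (γ : Γ) : γ ^ p = 1 := by
  have h1 : (γ ^ p).toAdd = p • γ.toAdd := toAdd_pow γ p
  have h2 : (p : ℕ) • γ.toAdd = ((p : ZMod p) • γ.toAdd) := (Nat.cast_smul_eq_nsmul _ _ _).symm
  have h3 : ((p : ZMod p) • γ.toAdd) = 0 := by
    rw [ZMod.natCast_self, zero_smul]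
  apply Multiplicative.toAdd.injective
  rw [h1, h2, h3]
  rfl

lemma gamma_card : Fintype.card Γ = p ^ 2 := by
  haveI : NeZero p := ⟨(Fact.out : p.Prime).ne_zero⟩
  rw [Fintype.card_multiplicative, Fintype.card_prod, ZMod.card, sq]

end MainAux

section Main

variable (p : ℕ) [Fact p.Prime]
  (J : GLat (Multiplicative (ZMod p × ZMod p)))
  (π : MonoidAlgebra ℤ (Multiplicative (ZMod p × ZMod p)) →+ J.carrier)
  (hsurj : Function.Surjective π)
  (hker : π.ker = AddSubgroup.zmultiples
    (∑ γ : Multiplicative (ZMod p × ZMod p), MonoidAlgebra.single γ (1 : ℤ)))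
  (hequi : ∀ (γ : Multiplicative (ZMod p × ZMod p))
      (x : MonoidAlgebra ℤ (Multiplicative (ZMod p × ZMod p))),
      π (MonoidAlgebra.single γ (1 : ℤ) * x) = γ • π x)

local notation "Γ" => Multiplicative (ZMod p × ZMod p)

include hsurj hker hequi in
theorem main_aux (L : GLat Γ) (hQP : L.IsQuasiPermutation)
    (ι₀ : J.carrier →+ L.carrier) (ρ₀ : L.carrier →+ J.carrier)
    (hι₀ : ∀ (γ : Γ) (x : J.carrier), ι₀ (γ • x) = γ • ι₀ x)
    (hρ₀ : ∀ (γ : Γ) (x : L.carrier), ρ₀ (γ • x) = γ • ρ₀ x)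
    (hretr : ∀ a, ρ₀ (ι₀ a) = a) : False := by
  classical
  haveI : NeZero p := ⟨(Fact.out : p.Prime).ne_zero⟩
  have hp2 : 2 ≤ p := (Fact.out : p.Prime).two_le
  have hppos : 0 < p := by omega
  -- the norm element
  set Nrm : MonoidAlgebra ℤ Γ := ∑ γ : Γ, MonoidAlgebra.single γ (1 : ℤ) with hNrm
  have hN1 : ∀ c : Γ, Nrm.coeff c = 1 := by
    intro c
    rw [hNrm, MonoidAlgebra.coeff_sum, Finsupp.finset_sum_apply]
    simp only [MonoidAlgebra.coeff_single]
    rw [Finset.sum_congr rfl (fun γ _ => Finsupp.single_apply)]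
    simp [Finset.sum_ite_eq' Finset.univ c]
  have hNker : π Nrm = 0 := by
    have : Nrm ∈ π.ker := by rw [hker]; exact AddSubgroup.mem_zmultiples _
    exact this
  -- lifting functionals to J
  set sect : J.carrier → MonoidAlgebra ℤ Γ := Function.surjInv hsurj with hsect0
  have hsect : Function.RightInverse sect π := Function.rightInverse_surjInv hsurj
  have hliftker : ∀ (F : MonoidAlgebra ℤ Γ →+ ℤ), F Nrm = 0 → π.ker ≤ F.ker := by
    intro F hF y hy
    rw [hker] at hy
    obtain ⟨k, rfl⟩ := AddSubgroup.mem_zmultiples_iff.mp hy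
    show F (k • Nrm) = 0
    rw [map_zsmul, hF, smul_zero]
  set dlift : (MonoidAlgebra ℤ Γ →+ ℤ) → (J.carrier →+ ℤ) := fun F =>
    if hF : F Nrm = 0 then π.liftOfRightInverse sect hsect ⟨F, hliftker F hF⟩ else 0
    with hdlift0
  have hdlift : ∀ (F : MonoidAlgebra ℤ Γ →+ ℤ) (hF : F Nrm = 0) (x : MonoidAlgebra ℤ Γ),
      dlift F (π x) = F x := by
    intro F hF x
    rw [hdlift0]
    simp only [dif_pos hF]
    exact π.liftOfRightInverse_comp_apply sect hsect ⟨F, hliftker F hF⟩ x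
  -- the functionals
  set Fγ : Γ → (MonoidAlgebra ℤ Γ →+ ℤ) := fun γ =>
    AddMonoidHom.mk' (fun x => p * (x.coeff γ - x.coeff 1)) (by
      intro x y
      show (p : ℤ) * ((x + y).coeff γ - (x + y).coeff 1) = _
      rw [show ((x + y).coeff γ : ℤ) = x.coeff γ + y.coeff γ from rfl,
        show ((x + y).coeff 1 : ℤ) = x.coeff 1 + y.coeff 1 from rfl]
      ring) with hFγ0
  have hFγN : ∀ γ : Γ, Fγ γ Nrm = 0 := by
    intro γ
    show (p : ℤ) * (Nrm.coeff γ - Nrm.coeff 1) = 0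
    rw [hN1, hN1]; ring
  set U : Γ → (MonoidAlgebra ℤ Γ →+ ℤ) := fun γ₀ =>
    AddMonoidHom.mk' (fun x => p * x.coeff 1 - ∑ l ∈ Finset.range p, x.coeff (γ₀ ^ l)) (by
      intro x y
      show (p : ℤ) * (x + y).coeff 1 - ∑ l ∈ Finset.range p, (x + y).coeff (γ₀ ^ l) = _
      rw [show ((x + y).coeff 1 : ℤ) = x.coeff 1 + y.coeff 1 from rfl,
        Finset.sum_congr rfl (fun l (_ : l ∈ Finset.range p) =>
          show ((x + y).coeff (γ₀ ^ l) : ℤ) = x.coeff (γ₀ ^ l) + y.coeff (γ₀ ^ l) from rfl),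
        Finset.sum_add_distrib]
      ring) with hU0
  have hUN : ∀ γ₀ : Γ, U γ₀ Nrm = 0 := by
    intro γ₀
    show (p : ℤ) * Nrm.coeff 1 - ∑ l ∈ Finset.range p, Nrm.coeff (γ₀ ^ l) = 0
    rw [hN1, Finset.sum_congr rfl (fun l _ => hN1 _), Finset.sum_const, Finset.card_range]
    simp
  set φ : Γ → (J.carrier →+ ℤ) := fun γ => dlift (Fγ γ) with hφ0
  have hφ : ∀ (γ : Γ) (x : MonoidAlgebra ℤ Γ), φ γ (π x) = p * (x.coeff γ - x.coeff 1) :=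
    fun γ x => hdlift (Fγ γ) (hFγN γ) x
  set uJ : Γ → (J.carrier →+ ℤ) := fun γ₀ => dlift (U γ₀) with huJ0
  have huJ : ∀ (γ₀ : Γ) (x : MonoidAlgebra ℤ Γ),
      uJ γ₀ (π x) = p * x.coeff 1 - ∑ l ∈ Finset.range p, x.coeff (γ₀ ^ l) :=
    fun γ₀ x => hdlift (U γ₀) (hUN γ₀) x
  -- coefficient computation
  have hcoef : ∀ (α : Γ) (x : MonoidAlgebra ℤ Γ) (c : Γ),
      (MonoidAlgebra.single α (1 : ℤ) * x).coeff c = x.coeff (α⁻¹ * c) := by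
    intro α x.coeff c
    rw [MonoidAlgebra.coeff_single_mul_apply, one_mul]
  have htrans : ∀ (γ : Γ) (y : L.carrier) (x : MonoidAlgebra ℤ Γ), ρ₀ y = π x →
      ρ₀ (γ⁻¹ • y) = π (MonoidAlgebra.single γ⁻¹ (1 : ℤ) * x) := by
    intro γ y x hx
    rw [hρ₀, hx, hequi γ⁻¹ x]
  -- the cocycle ξ
  set ξ : Γ → DualM L.carrier := fun γ => DualM.mk' ((φ γ).comp ρ₀) with hξ0
  have hξapp : ∀ (γ : Γ) (y : L.carrier), ξ γ y = φ γ (ρ₀ y) := fun γ y => rfl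
  have hξcoc : ∀ γ δ : Γ, ξ (γ * δ) = ξ γ + γ • ξ δ := by
    intro γ δ
    apply DFunLike.ext
    intro y
    obtain ⟨x, hx⟩ := hsurj (ρ₀ y)
    have hL : ξ (γ * δ) y = p * (x.coeff (γ * δ) - x.coeff 1) := by
      rw [hξapp, ← hx, hφ]
    have hR2 : (γ • ξ δ) y = p * (x.coeff (γ * δ) - x.coeff γ) := by
      rw [DualM.smul_apply, hξapp, htrans γ y x hx.symm, hφ, hcoef, hcoef, inv_inv, mul_one]
    have hR1 : ξ γ y = p * (x.coeff γ - x.coeff 1) := by rw [hξapp, ← hx, hφ]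
    rw [hL, show (ξ γ + γ • ξ δ) y = DualM.evalHom y (ξ γ + γ • ξ δ) from rfl, map_add,
      DualM.evalHom_apply, DualM.evalHom_apply, hR1, hR2]
    ring
  -- the cyclic local triviality of ξ
  have hξsha : ∀ γ₀ : Γ, ∃ u : DualM L.carrier, ∀ k : ℕ, ξ (γ₀ ^ k) = γ₀ ^ k • u - u := by
    intro γ₀
    refine ⟨DualM.mk' ((uJ γ₀).comp ρ₀), fun k => ?_⟩
    apply DFunLike.ext
    intro y
    obtain ⟨x, hx⟩ := hsurj (ρ₀ y)
    have hL : ξ (γ₀ ^ k) y = p * (x.coeff (γ₀ ^ k) - x.coeff 1) := by rw [hξapp, ← hx, hφ]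
    have hsum : ∑ l ∈ Finset.range p, x.coeff (γ₀ ^ k * γ₀ ^ l) = ∑ l ∈ Finset.range p, x.coeff (γ₀ ^ l) := by
      have hper : ∀ l, x.coeff (γ₀ ^ (l + p)) = x.coeff (γ₀ ^ l) := by
        intro l; rw [pow_add, gamma_exp, mul_one]
      have := periodic_shift_sum (fun l => x.coeff (γ₀ ^ l)) p hper k
      rw [← this]
      exact Finset.sum_congr rfl (fun l _ => by rw [← pow_add])
    have hR : (γ₀ ^ k • DualM.mk' ((uJ γ₀).comp ρ₀) - DualM.mk' ((uJ γ₀).comp ρ₀)) y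
        = (p * x.coeff (γ₀ ^ k) - ∑ l ∈ Finset.range p, x.coeff (γ₀ ^ l))
          - (p * x.coeff 1 - ∑ l ∈ Finset.range p, x.coeff (γ₀ ^ l)) := by
      rw [show (γ₀ ^ k • DualM.mk' ((uJ γ₀).comp ρ₀) - DualM.mk' ((uJ γ₀).comp ρ₀)) y
          = DualM.evalHom y (γ₀ ^ k • DualM.mk' ((uJ γ₀).comp ρ₀)
            - DualM.mk' ((uJ γ₀).comp ρ₀)) from rfl, map_sub,
        DualM.evalHom_apply, DualM.evalHom_apply, DualM.smul_apply]
      congr 1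
      · show uJ γ₀ (ρ₀ ((γ₀ ^ k)⁻¹ • y)) = _
        rw [htrans (γ₀ ^ k) y x hx.symm, huJ]
        congr 1
        · rw [hcoef, inv_inv, mul_one]
        · rw [← hsum]
          exact Finset.sum_congr rfl (fun l _ => by rw [hcoef, inv_inv])
      · show uJ γ₀ (ρ₀ y) = _
        rw [← hx, huJ]
    rw [hL, hR]
    ring
  -- ξ is not a coboundary
  have hnc : ¬ ∃ w : DualM L.carrier, ∀ γ : Γ, ξ γ = γ • w - w := by
    rintro ⟨w, hw⟩
    set W : MonoidAlgebra ℤ Γ →+ ℤ :=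
      AddMonoidHom.mk' (fun x => w (ι₀ (π x))) (by
        intro x y
        show w (ι₀ (π (x + y))) = w (ι₀ (π x)) + w (ι₀ (π y))
        rw [map_add, map_add, map_add]) with hW0
    have hWid : ∀ (γ : Γ) (x : MonoidAlgebra ℤ Γ),
        (p : ℤ) * (x.coeff γ - x.coeff 1) = W (MonoidAlgebra.single γ⁻¹ (1 : ℤ) * x) - W x := by
      intro γ x
      have h1 := congrArg (fun ψ : DualM L.carrier => ψ (ι₀ (π x))) (hw γ)
      have hL1 : ξ γ (ι₀ (π x)) = p * (x.coeff γ - x.coeff 1) := by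
        rw [hξapp, hretr, hφ]
      have hR1 : (γ • w - w) (ι₀ (π x)) = W (MonoidAlgebra.single γ⁻¹ (1 : ℤ) * x) - W x := by
        rw [show (γ • w - w) (ι₀ (π x))
            = DualM.evalHom (ι₀ (π x)) (γ • w - w) from rfl, map_sub,
          DualM.evalHom_apply, DualM.evalHom_apply, DualM.smul_apply]
        congr 1
        show w (γ⁻¹ • ι₀ (π x)) = _
        rw [← hι₀, ← hequi γ⁻¹ x]
        rfl
      rw [hL1, hR1] at h1
      exact h1
    set t : Γ → ℤ := fun c => W (MonoidAlgebra.single c (1 : ℤ)) with ht0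
    have ht : ∀ γ : Γ, γ ≠ 1 → t γ = t 1 - p := by
      intro γ hγ
      have h1 := hWid γ (MonoidAlgebra.single γ (1 : ℤ))
      rw [MonoidAlgebra.single_mul_single, inv_mul_cancel, one_mul] at h1
      have h2 : (MonoidAlgebra.single γ (1 : ℤ)).coeff γ = 1 := Finsupp.single_eq_same
      have h3 : (MonoidAlgebra.single γ (1 : ℤ)).coeff 1 = 0 := Finsupp.single_eq_of_ne' hγ
      rw [h2, h3] at h1
      have : (p : ℤ) = t 1 - t γ := by simpa using h1
      omega
    have hWN : W Nrm = 0 := by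
      show w (ι₀ (π Nrm)) = 0
      rw [hNker, map_zero, map_zero]
    have hsum : W Nrm = ∑ c : Γ, t c := by
      rw [hNrm, map_sum]
    have hsplit : ∑ c : Γ, t c = t 1 + ∑ c ∈ Finset.univ.erase 1, t c :=
      (Finset.add_sum_erase Finset.univ t (Finset.mem_univ 1)).symm
    have herase : ∑ c ∈ Finset.univ.erase 1, t c = ((p ^ 2 - 1 : ℕ) : ℤ) * (t 1 - p) := by
      rw [Finset.sum_congr rfl (fun c hc => ht c (Finset.mem_erase.mp hc).1),
        Finset.sum_const, Finset.card_erase_of_mem (Finset.mem_univ 1),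
        Finset.card_univ, gamma_card, nsmul_eq_mul]
    have hcast : ((p ^ 2 - 1 : ℕ) : ℤ) = (p : ℤ) ^ 2 - 1 := by
      have : 1 ≤ p ^ 2 := Nat.one_le_pow _ _ hppos
      push_cast [Nat.cast_sub this]
      ring
    have hfinal : 0 = t 1 + ((p : ℤ) ^ 2 - 1) * (t 1 - p) := by
      rw [← hcast, ← herase, ← hsplit, ← hsum, hWN]
    -- derive a contradiction
    have h4 : (p : ℤ) * ((p : ℤ) * t 1 - (p : ℤ) * (p : ℤ) + 1) = 0 := by ring_nf; linarith [hfinal]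
    have h5 : (p : ℤ) * t 1 - (p : ℤ) * (p : ℤ) + 1 = 0 := by
      rcases mul_eq_zero.mp h4 with h | h
      · exfalso; have : (p : ℤ) ≠ 0 := by exact_mod_cast hppos.ne'
        exact this h
      · exact h
    have h6 : (p : ℤ) ∣ 1 := ⟨(p : ℤ) - t 1, by linarith⟩
    have h7 := Int.le_of_dvd one_pos h6
    have : (2 : ℤ) ≤ (p : ℤ) := by exact_mod_cast hp2
    omega
  -- now the diagram chase
  obtain ⟨P, P', f, g, hPperm, hP'perm, hef, heg, hfinj, hgsurj, hkerg⟩ := hQP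
  obtain ⟨ιP, bP, hbP⟩ := hPperm
  obtain ⟨ιP', bP', hbP'⟩ := hP'perm
  set σP : Γ → Equiv.Perm ιP := fun γ => (hbP γ).choose with hσP0
  have hσP : ∀ (γ : Γ) (i : ιP), γ • bP i = bP (σP γ i) := fun γ => (hbP γ).choose_spec
  set σP' : Γ → Equiv.Perm ιP' := fun γ => (hbP' γ).choose with hσP'0
  have hσP' : ∀ (γ : Γ) (i : ιP'), γ • bP' i = bP' (σP' γ i) := fun γ => (hbP' γ).choose_spec
  haveI : Finite ιP := Module.Finite.finite_basis bP
  haveI : Fintype ιP := Fintype.ofFinite ιP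
  haveI : Finite ιP' := Module.Finite.finite_basis bP'
  haveI : Fintype ιP' := Fintype.ofFinite ιP'
  -- range f = ker g consequences
  have hgf : ∀ a : L.carrier, g (f a) = 0 := by
    intro a
    have : f a ∈ f.range := AddMonoidHom.mem_range.mpr ⟨a, rfl⟩
    rw [← hkerg] at this
    exact this
  -- a ℤ-linear splitting of g
  haveI : Module.Projective ℤ P'.carrier := Module.Projective.of_free
  obtain ⟨s, hs⟩ := Module.projective_lifting_property g.toIntLinearMap LinearMap.id
    (by intro y; obtain ⟨v, hv⟩ := hgsurj y; exact ⟨v, hv⟩)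
  have hgs : ∀ y : P'.carrier, g (s y) = y := by
    intro y
    have := congrArg (fun h : P'.carrier →ₗ[ℤ] P'.carrier => h y) hs
    exact this
  have hsplit : ∀ v : P.carrier, ∃ a : L.carrier, f a = v - s (g v) := by
    intro v
    have h1 : g (v - s (g v)) = 0 := by rw [map_sub, hgs]; abel
    have h2 : v - s (g v) ∈ g.ker := h1
    rw [hkerg] at h2
    exact AddMonoidHom.mem_range.mp h2
  set r : P.carrier →+ L.carrier := AddMonoidHom.mk' (fun v => (hsplit v).choose) (by
    intro v v'
    apply hfinj
    rw [map_add f, (hsplit v).choose_spec, (hsplit v').choose_spec, (hsplit (v + v')).choose_spec,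
      map_add, map_add]
    abel) with hr0
  have hrf : ∀ a : L.carrier, r (f a) = a := by
    intro a
    apply hfinj
    show f ((hsplit (f a)).choose) = f a
    rw [(hsplit (f a)).choose_spec, hgf, map_zero, sub_zero]
  -- dual maps
  set F : DualM P.carrier →+ DualM L.carrier := DualM.compHom f with hF0
  set Gm : DualM P'.carrier →+ DualM P.carrier := DualM.compHom g with hGm0
  have hFapp : ∀ (ψ : DualM P.carrier) (a : L.carrier), F ψ a = ψ (f a) := fun ψ a => rfl
  have hGmapp : ∀ (χ : DualM P'.carrier) (v : P.carrier), Gm χ v = χ (g v) := fun χ v => rfl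
  have hFsurj : Function.Surjective F := by
    intro q
    refine ⟨DualM.mk' ((DualM.toHom q).comp r), ?_⟩
    apply DFunLike.ext
    intro a
    show q (r (f a)) = q a
    rw [hrf]
  have hGinj : Function.Injective Gm := by
    intro χ χ' h
    apply DFunLike.ext
    intro y
    obtain ⟨v, rfl⟩ := hgsurj y
    have := congrArg (fun ψ : DualM P.carrier => ψ v) h
    exact this
  have hFG : ∀ χ : DualM P'.carrier, F (Gm χ) = 0 := by
    intro χ
    apply DFunLike.ext
    intro a
    show χ (g (f a)) = 0
    rw [hgf, map_zero]
  have hexact : ∀ ψ : DualM P.carrier, F ψ = 0 → ∃ χ, Gm χ = ψ := by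
    intro ψ hψ
    have hψf : ∀ a : L.carrier, ψ (f a) = 0 := by
      intro a
      have := congrArg (fun q : DualM L.carrier => q a) hψ
      exact this
    have hkk : g.ker ≤ (DualM.toHom ψ).ker := by
      intro v hv
      rw [hkerg] at hv
      obtain ⟨a, rfl⟩ := AddMonoidHom.mem_range.mp hv
      exact hψf a
    set sect' : P'.carrier → P.carrier := Function.surjInv hgsurj with hsect'0
    have hsect' : Function.RightInverse sect' g := Function.rightInverse_surjInv hgsurj
    refine ⟨DualM.mk' (g.liftOfRightInverse sect' hsect' ⟨DualM.toHom ψ, hkk⟩), ?_⟩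
    apply DFunLike.ext
    intro v
    show (g.liftOfRightInverse sect' hsect' ⟨DualM.toHom ψ, hkk⟩) (g v) = ψ v
    exact g.liftOfRightInverse_comp_apply sect' hsect' ⟨DualM.toHom ψ, hkk⟩ v
  have hFe : ∀ (γ : Γ) (ψ : DualM P.carrier), F (γ • ψ) = γ • F ψ := by
    intro γ ψ
    apply DFunLike.ext
    intro a
    show ψ (γ⁻¹ • f a) = ψ (f (γ⁻¹ • a))
    rw [hef]
  have hGe : ∀ (γ : Γ) (χ : DualM P'.carrier), Gm (γ • χ) = γ • Gm χ := by
    intro γ χ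
    apply DFunLike.ext
    intro v
    show χ (γ⁻¹ • g v) = χ (g (γ⁻¹ • v))
    rw [heg]
  obtain ⟨w, hw⟩ := chase (DualM.dualBasis bP) σP (DualM.dualBasis_perm bP σP hσP)
    (DualM.dualBasis bP') σP' (DualM.dualBasis_perm bP' σP' hσP')
    F Gm hFsurj hGinj hFG hexact hFe hGe ξ hξcoc hξsha
  exact hnc ⟨w, hw⟩

end Main

/-- Voskresenskiĭ's theorem: for `Γ = ℤ/pℤ × ℤ/pℤ` (`p` prime), the `Γ`-lattice `J_Γ`,
defined by the exact sequence `0 → ℤ → ℤ[Γ] → J_Γ → 0` with the first map the norm map,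
is not quasi-invertible; in particular it is not quasi-permutation (and is not a direct
summand of any quasi-permutation `Γ`-lattice, which is what quasi-invertibility means). -/
theorem JGamma_not_quasiInvertible (p : ℕ) [Fact p.Prime]
    (J : GLat (Multiplicative (ZMod p × ZMod p)))
    (π : MonoidAlgebra ℤ (Multiplicative (ZMod p × ZMod p)) →+ J.carrier)
    (hsurj : Function.Surjective π)
    (hker : π.ker = AddSubgroup.zmultiples
      (∑ γ : Multiplicative (ZMod p × ZMod p), MonoidAlgebra.single γ (1 : ℤ)))
    (hequi : ∀ (γ : Multiplicative (ZMod p × ZMod p))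
        (x : MonoidAlgebra ℤ (Multiplicative (ZMod p × ZMod p))),
        π (MonoidAlgebra.single γ (1 : ℤ) * x) = γ • π x) :
    ¬ J.IsQuasiInvertible ∧ ¬ J.IsQuasiPermutation := by
  constructor
  · rintro ⟨M, hQP⟩
    exact main_aux p J π hsurj hker hequi (J.prod M) hQP
      (AddMonoidHom.inl J.carrier M.carrier) (AddMonoidHom.fst J.carrier M.carrier)
      (fun γ x => Prod.ext rfl (smul_zero γ).symm) (fun γ x => rfl) (fun a => rfl)
  · intro hQP
    exact main_aux p J π hsurj hker hequi J hQP
      (AddMonoidHom.id J.carrier) (AddMonoidHom.id J.carrier)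
      (fun γ x => rfl) (fun γ x => rfl) (fun a => rfl)
end

section
/- Let W₁,…,W_m be finite groups, V_i a finite-dimensional ℚ-representation of W_i, V = V₁ ⊕ ⋯ ⊕ V_m with the action of W = W₁ × ⋯ × W_m, and L ⊂ V a W-invariant lattice (finitely generated free subgroup). If L is a quasi-permutation W-lattice, then for each i the intersection L_i = L ∩ V_i is a quasi-permutation W_i-lattice. -/
universe u

private lemma basis_transport {M : Type u} [AddCommGroup M] (m1 m2 : Module ℤ M)
    {κ : Type u} (b : @Module.Basis κ ℤ M _ _ m1) :
    ∃ b2 : @Module.Basis κ ℤ M _ _ m2, ∀ i, b2 i = b i := by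
  letI := AddCommGroup.uniqueIntModule (M := M)
  obtain rfl : m1 = m2 := Subsingleton.elim _ _
  exact ⟨b, fun _ => rfl⟩

private lemma finite_transport {M : Type u} [AddCommGroup M] (m1 m2 : Module ℤ M)
    (h : @Module.Finite ℤ M _ _ m1) : @Module.Finite ℤ M _ _ m2 := by
  letI := AddCommGroup.uniqueIntModule (M := M)
  obtain rfl : m1 = m2 := Subsingleton.elim _ _
  exact h

private theorem aux_sub_quasiPerm {Γ : Type u} [Group Γ] [Fintype Γ]
    (A B : GLat Γ) (k : A →+ B) (hkinj : Function.Injective k)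
    (hkequi : GLat.Equivariant k)
    (htriv : ∀ (γ : Γ) (b : B.carrier), γ • b - b ∈ k.range)
    (htf : ∀ (n : ℤ) (b : B.carrier), n ≠ 0 → n • b ∈ k.range → b ∈ k.range)
    (hqp : B.IsQuasiPermutation) : A.IsQuasiPermutation := by
  classical
  obtain ⟨P, P', f, g, hPperm, hP'perm, hef, heg, hfinj, hgsurj, hker⟩ := hqp
  -- the submodule f(k(A)) of P
  set Asub : Submodule ℤ P.carrier := AddSubgroup.toIntSubmodule (f.comp k).range with hAsub
  have hAsub_mem : ∀ p : P.carrier, p ∈ Asub ↔ ∃ a, f (k a) = p := fun p => Iff.rfl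
  set X := P.carrier ⧸ Asub with hX
  -- the submodule k(A) of B
  set K : Submodule ℤ B.carrier := AddSubgroup.toIntSubmodule k.range with hK
  have hK_mem : ∀ b : B.carrier, b ∈ K ↔ ∃ a, k a = b := fun b => Iff.rfl
  set C := B.carrier ⧸ K with hC
  -- action of Γ on X
  have hA_stable : ∀ γ : Γ, Asub ≤ Asub.comap
      ((DistribMulAction.toAddMonoidHom P.carrier γ).toIntLinearMap) := by
    rintro γ p ⟨a, rfl⟩
    refine ⟨γ • a, ?_⟩
    show f (k (γ • a)) = γ • (f (k a))
    rw [hkequi, hef]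
  let Xsm : Γ → (X →ₗ[ℤ] X) := fun γ =>
    Submodule.mapQ Asub Asub ((DistribMulAction.toAddMonoidHom P.carrier γ).toIntLinearMap)
      (hA_stable γ)
  letI instSMulX : SMul Γ X := ⟨fun γ ξ => Xsm γ ξ⟩
  have hmkX : ∀ (γ : Γ) (p : P.carrier),
      γ • (Submodule.Quotient.mk p : X) = Submodule.Quotient.mk (γ • p) := by
    intro γ p
    rfl
  letI instMulX : MulAction Γ X :=
    { one_smul := by
        intro ξ; obtain ⟨p, rfl⟩ := Submodule.Quotient.mk_surjective _ ξ
        rw [hmkX, one_smul]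
      mul_smul := by
        intro γ δ ξ; obtain ⟨p, rfl⟩ := Submodule.Quotient.mk_surjective _ ξ
        rw [hmkX, hmkX, hmkX, mul_smul] }
  letI instActX : DistribMulAction Γ X :=
    { smul_zero := fun γ => (Xsm γ).map_zero
      smul_add := fun γ ξ η => (Xsm γ).map_add ξ η }
  -- the map θ : C → X induced by f
  have hKle : K ≤ Asub.comap f.toIntLinearMap := by rintro b ⟨a, rfl⟩; exact ⟨a, rfl⟩
  let θ : C →ₗ[ℤ] X := Submodule.mapQ K Asub f.toIntLinearMap hKle
  have hθmk : ∀ b : B.carrier,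
      θ (Submodule.Quotient.mk b) = Submodule.Quotient.mk (f b) := by
    intro b; rfl
  -- the map ψ : X → P' induced by g
  have hAle : Asub ≤ LinearMap.ker g.toIntLinearMap := by
    rintro p ⟨a, rfl⟩
    have : f (k a) ∈ f.range := ⟨k a, rfl⟩
    rw [← hker, AddMonoidHom.mem_ker] at this
    exact this
  let ψ : X →ₗ[ℤ] P'.carrier := Asub.liftQ g.toIntLinearMap hAle
  have hψmk : ∀ p : P.carrier, ψ (Submodule.Quotient.mk p) = g p := fun p => rfl
  have hψsm : ∀ (γ : Γ) (ξ : X), ψ (γ • ξ) = γ • ψ ξ := by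
    intro γ ξ; obtain ⟨p, rfl⟩ := Submodule.Quotient.mk_surjective _ ξ
    rw [hmkX, hψmk, hψmk, heg]
  -- θ is injective
  have hθinj : Function.Injective θ := by
    intro c₁ c₂ h
    obtain ⟨b₁, rfl⟩ := Submodule.Quotient.mk_surjective _ c₁
    obtain ⟨b₂, rfl⟩ := Submodule.Quotient.mk_surjective _ c₂
    rw [hθmk, hθmk, Submodule.Quotient.eq] at h
    obtain ⟨a, ha⟩ := h
    rw [Submodule.Quotient.eq]
    exact ⟨a, hfinj (by rw [map_sub]; exact ha)⟩
  -- exactness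
  have hψθ : ∀ c : C, ψ (θ c) = 0 := by
    intro c; obtain ⟨b, rfl⟩ := Submodule.Quotient.mk_surjective _ c
    rw [hθmk, hψmk]
    have : f b ∈ f.range := ⟨b, rfl⟩
    rw [← hker, AddMonoidHom.mem_ker] at this
    exact this
  have hkerψ : ∀ ξ : X, ψ ξ = 0 → ∃ c, θ c = ξ := by
    intro ξ hξ; obtain ⟨p, rfl⟩ := Submodule.Quotient.mk_surjective _ ξ
    rw [hψmk] at hξ
    have : p ∈ f.range := by rw [← hker, AddMonoidHom.mem_ker]; exact hξ
    obtain ⟨b, rfl⟩ := this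
    exact ⟨Submodule.Quotient.mk b, hθmk b⟩
  -- Γ acts trivially on the image of θ
  have htrivθ : ∀ (γ : Γ) (c : C), γ • θ c = θ c := by
    intro γ c; obtain ⟨b, rfl⟩ := Submodule.Quotient.mk_surjective _ c
    rw [hθmk, hmkX]
    rw [Submodule.Quotient.eq]
    obtain ⟨a, ha⟩ := htriv γ b
    exact ⟨a, by rw [← hef, ← map_sub]; exact congrArg f ha⟩
  -- C is a lattice
  haveI : NoZeroSMulDivisors ℤ C := by
    refine ⟨fun {n c} h => ?_⟩
    by_cases hn : n = 0
    · exact Or.inl hn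
    · right
      obtain ⟨b, rfl⟩ := Submodule.Quotient.mk_surjective _ c
      rw [← Submodule.Quotient.mk_smul, Submodule.Quotient.mk_eq_zero] at h
      rw [Submodule.Quotient.mk_eq_zero]
      exact htf n b hn h
  haveI finC : Module.Finite ℤ C := Module.Finite.of_surjective K.mkQ
    (Submodule.Quotient.mk_surjective _)
  haveI freeC : Module.Free ℤ C := Module.free_of_finite_type_torsion_free'
  set cB := Module.Free.chooseBasis ℤ C with hcB
  -- permutation data for P'
  obtain ⟨ιP', b', hb'⟩ := hP'perm
  have hb'inj : Function.Injective b' := b'.injective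
  let σ : Γ → Equiv.Perm ιP' := fun γ => (hb' γ).choose
  have hσ : ∀ (γ : Γ) (s : ιP'), γ • b' s = b' (σ γ s) := fun γ => (hb' γ).choose_spec
  have hσmul : ∀ (γ δ : Γ) (s : ιP'), σ (γ * δ) s = σ γ (σ δ s) := by
    intro γ δ s; apply hb'inj; rw [← hσ, ← hσ, ← hσ, mul_smul]
  have hσone : ∀ s, σ 1 s = s := by
    intro s; apply hb'inj; rw [← hσ, one_smul]
  -- orbit setoid
  let st : Setoid ιP' :=
    ⟨fun s t => ∃ γ, σ γ s = t,
     ⟨fun s => ⟨1, hσone s⟩,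
      by rintro s t ⟨γ, rfl⟩; exact ⟨γ⁻¹, by rw [← hσmul, inv_mul_cancel, hσone]⟩,
      by rintro s t u ⟨γ, rfl⟩ ⟨δ, rfl⟩; exact ⟨δ * γ, hσmul δ γ s⟩⟩⟩
  let rep : ιP' → ιP' := fun s => (Quotient.mk st s).out
  have hrep_rel : ∀ s, ∃ γ, σ γ (rep s) = s := by
    intro s
    exact Quotient.exact (Quotient.out_eq (Quotient.mk st s))
  have hrep_σ : ∀ (γ : Γ) (s : ιP'), rep (σ γ s) = rep s := by
    intro γ s
    show (Quotient.mk st (σ γ s)).out = (Quotient.mk st s).out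
    congr 1
    exact Quotient.sound ⟨γ⁻¹, by rw [← hσmul, inv_mul_cancel, hσone]⟩
  -- lifts of the basis of P'
  let x₀ : ιP' → X := fun t => Submodule.Quotient.mk (hgsurj (b' t)).choose
  have hψx₀ : ∀ t, ψ (x₀ t) = b' t := by
    intro t; rw [hψmk]; exact (hgsurj (b' t)).choose_spec
  -- any lift of a basis vector is fixed by its stabilizer
  have lemA : ∀ (γ : Γ) (t : ιP'), σ γ t = t → γ • x₀ t = x₀ t := by
    intro γ t hfix
    set d := γ • x₀ t - x₀ t with hd
    have hdker : ψ d = 0 := by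
      rw [hd, map_sub, hψsm, hψx₀, hσ, hfix, sub_self]
    obtain ⟨c, hc⟩ := hkerψ d hdker
    have hγd : γ • d = d := by rw [← hc]; exact htrivθ γ c
    have hpow : ∀ n : ℕ, γ ^ n • x₀ t = x₀ t + n • d := by
      intro n; induction n with
      | zero => simp
      | succ n ih =>
        have h5 : γ • (n • d) = n • (γ • d) :=
          map_nsmul (DistribMulAction.toAddMonoidHom X γ) n d
        have h1 : γ • x₀ t = x₀ t + d := by rw [hd]; abel
        rw [pow_succ', mul_smul, ih, smul_add, h5, hγd, h1, succ_nsmul]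
        abel
    have h2 := hpow (orderOf γ)
    rw [pow_orderOf_eq_one, one_smul] at h2
    have h3 : (orderOf γ) • d = 0 := by
      have := h2.symm
      rwa [left_eq_add] at h2
    have hd0 : d = 0 := by
      rw [← hc] at h3
      rw [← map_nsmul] at h3
      have h4 : (orderOf γ) • c = 0 := hθinj (by rw [h3, map_zero])
      have h5 : ((orderOf γ : ℤ)) • c = 0 := by rw [natCast_zsmul]; exact h4
      have h6 : c = 0 :=
        (smul_eq_zero.mp h5).resolve_left (by exact_mod_cast (orderOf_pos γ).ne')
      rw [← hc, h6, map_zero]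
    rw [hd] at hd0
    exact sub_eq_zero.mp hd0
  have lemA' : ∀ (γ δ : Γ) (t : ιP'), σ γ t = σ δ t → γ • x₀ t = δ • x₀ t := by
    intro γ δ t h
    have h1 : σ (δ⁻¹ * γ) t = t := by
      rw [hσmul, h, ← hσmul, inv_mul_cancel, hσone]
    have := lemA (δ⁻¹ * γ) t h1
    rw [mul_smul] at this
    calc γ • x₀ t = δ • (δ⁻¹ • (γ • x₀ t)) := by rw [smul_inv_smul]
    _ = δ • x₀ t := by rw [this]
  -- the equivariant system of lifts
  let x : ιP' → X := fun s => (hrep_rel s).choose • x₀ (rep s)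
  have hx_psi : ∀ s, ψ (x s) = b' s := by
    intro s
    show ψ (_ • x₀ (rep s)) = b' s
    rw [hψsm, hψx₀, hσ, (hrep_rel s).choose_spec]
  have hx_equi : ∀ (γ : Γ) (s : ιP'), γ • x s = x (σ γ s) := by
    intro γ s
    show γ • ((hrep_rel s).choose • x₀ (rep s)) = (hrep_rel (σ γ s)).choose • x₀ (rep (σ γ s))
    rw [← mul_smul]
    have hrw : rep (σ γ s) = rep s := hrep_σ γ s
    simp only [hrw]
    apply lemA'
    rw [hσmul, (hrep_rel s).choose_spec]
    have := (hrep_rel (σ γ s)).choose_spec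
    simp only [hrw] at this
    exact this.symm
  -- the section P' → X
  let s' : P'.carrier →ₗ[ℤ] X := Module.Basis.constr b' ℤ x
  have hs'b : ∀ t, s' (b' t) = x t := fun t => Module.Basis.constr_basis b' ℤ x t
  have hsec : ∀ q, ψ (s' q) = q := by
    have h : ψ ∘ₗ s' = LinearMap.id := by
      apply b'.ext
      intro t
      show ψ (s' (b' t)) = b' t
      rw [hs'b, hx_psi]
    intro q
    exact congrArg (fun F : P'.carrier →ₗ[ℤ] P'.carrier => F q) h
  -- the isomorphism C × P' ≃ X
  let Φ : (C × P'.carrier) →ₗ[ℤ] X := θ.coprod s'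
  have hΦapp : ∀ (c : C) (q : P'.carrier), Φ (c, q) = θ c + s' q := fun c q => rfl
  have hkey : ∀ u : C × P'.carrier, Φ u = 0 → u = 0 := by
    rintro ⟨c, q⟩ h
    rw [hΦapp] at h
    have hq : q = 0 := by
      have h2 := congrArg ψ h
      rw [map_add, hψθ, zero_add, hsec, map_zero] at h2
      exact h2
    subst hq
    rw [map_zero, add_zero] at h
    have hc : c = 0 := hθinj (by rw [h, map_zero])
    rw [hc]; rfl
  have hΦinj : Function.Injective Φ := by
    intro u v h
    have h2 := hkey (u - v) (by rw [map_sub, h, sub_self])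
    exact sub_eq_zero.mp h2
  have hΦsurj : Function.Surjective Φ := by
    intro ξ
    obtain ⟨c, hc⟩ := hkerψ (ξ - s' (ψ ξ)) (by rw [map_sub, hsec, sub_self])
    refine ⟨(c, ψ ξ), ?_⟩
    rw [hΦapp, hc]
    abel
  let eΦ : (C × P'.carrier) ≃ₗ[ℤ] X := LinearEquiv.ofBijective Φ ⟨hΦinj, hΦsurj⟩
  let bX0 : Module.Basis ((Module.Free.ChooseBasisIndex ℤ C) ⊕ ιP') ℤ X := (cB.prod b').map eΦ
  have hbX0_inl : ∀ a, bX0 (Sum.inl a) = θ (cB a) := by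
    intro a
    show eΦ ((cB.prod b') (Sum.inl a)) = θ (cB a)
    rw [Module.Basis.prod_apply]
    show Φ (cB a, 0) = θ (cB a)
    rw [hΦapp, map_zero, add_zero]
  have hbX0_inr : ∀ t, bX0 (Sum.inr t) = x t := by
    intro t
    show eΦ ((cB.prod b') (Sum.inr t)) = x t
    rw [Module.Basis.prod_apply]
    show Φ (0, b' t) = x t
    rw [hΦapp, map_zero, zero_add, hs'b]
  -- transport the basis to the canonical ℤ-module structure
  obtain ⟨bX, hbX⟩ := basis_transport (inferInstance) (AddCommGroup.toIntModule X) bX0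
  haveI freeX : @Module.Free ℤ X _ _ (AddCommGroup.toIntModule X) :=
    @Module.Free.of_basis ℤ X _ _ (AddCommGroup.toIntModule X) _ bX
  haveI finX : @Module.Finite ℤ X _ _ (AddCommGroup.toIntModule X) :=
    finite_transport _ _ (Module.Finite.of_surjective Asub.mkQ (Submodule.Quotient.mk_surjective _))
  -- package X as a Γ-lattice
  let Xg : GLat Γ := { carrier := X, acg := inferInstance, act := instActX,
                       free := freeX, fin := finX }
  -- the quotient map
  let gq : P.carrier →+ X := Asub.mkQ.toAddMonoidHom
  have hgq : ∀ p : P.carrier, gq p = Submodule.Quotient.mk p := fun p => rfl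
  refine ⟨P, Xg, f.comp k, gq, hPperm, ?_, ?_, ?_, ?_, ?_, ?_⟩
  · -- X is a permutation lattice
    refine ⟨(Module.Free.ChooseBasisIndex ℤ C) ⊕ ιP', bX, fun γ => ⟨Equiv.sumCongr (Equiv.refl _) (σ γ), ?_⟩⟩
    rintro (a | t)
    · have e1 : bX (Sum.inl a) = θ (cB a) := (hbX _).trans (hbX0_inl a)
      show γ • bX (Sum.inl a) = bX (Sum.inl a)
      rw [e1]
      exact htrivθ γ (cB a)
    · have e1 : bX (Sum.inr t) = x t := (hbX _).trans (hbX0_inr t)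
      have e2 : bX (Sum.inr (σ γ t)) = x (σ γ t) := (hbX _).trans (hbX0_inr (σ γ t))
      show γ • bX (Sum.inr t) = bX (Sum.inr (σ γ t))
      rw [e1, e2]
      exact hx_equi γ t
  · -- equivariance of f ∘ k
    intro γ a
    show f (k (γ • a)) = γ • f (k a)
    rw [hkequi, hef]
  · -- equivariance of the quotient map
    intro γ p
    show gq (γ • p) = γ • gq p
    rw [hgq, hgq, hmkX]
  · -- injectivity
    intro a₁ a₂ h
    exact hkinj (hfinj h)
  · -- surjectivity
    exact Submodule.Quotient.mk_surjective _
  · -- kernel equals range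
    ext p
    rw [AddMonoidHom.mem_ker, AddMonoidHom.mem_range]
    show Submodule.Quotient.mk p = 0 ↔ _
    rw [Submodule.Quotient.mk_eq_zero]
    rfl

/-- Restriction of a `Γ₀`-lattice along a group homomorphism `e : Γ →* Γ₀`. -/
private def GLat.restrict {Γ Γ₀ : Type u} [Group Γ] [Group Γ₀] (e : Γ →* Γ₀)
    (M : GLat Γ₀) : GLat Γ where
  carrier := M.carrier
  acg := M.acg
  act := DistribMulAction.compHom _ e
  free := M.free
  fin := M.fin

private lemma GLat.restrict_smul {Γ Γ₀ : Type u} [Group Γ] [Group Γ₀] (e : Γ →* Γ₀)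
    (M : GLat Γ₀) (γ : Γ) (m : M.carrier) :
    (γ • show (GLat.restrict e M).carrier from m) = e γ • m := rfl

private lemma GLat.restrict_perm {Γ Γ₀ : Type u} [Group Γ] [Group Γ₀] (e : Γ →* Γ₀)
    (M : GLat Γ₀) (h : M.IsPermutation) : (GLat.restrict e M).IsPermutation := by
  obtain ⟨ι, b, hb⟩ := h
  refine ⟨ι, b, fun γ => ?_⟩
  obtain ⟨σ, hσ⟩ := hb (e γ)
  exact ⟨σ, fun i => hσ i⟩

private lemma GLat.restrict_qp {Γ Γ₀ : Type u} [Group Γ] [Group Γ₀] (e : Γ →* Γ₀)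
    (M : GLat Γ₀) (h : M.IsQuasiPermutation) : (GLat.restrict e M).IsQuasiPermutation := by
  obtain ⟨P, P', f, g, hP, hP', hf, hg, hses⟩ := h
  refine ⟨GLat.restrict e P, GLat.restrict e P', f, g,
    GLat.restrict_perm e P hP, GLat.restrict_perm e P' hP', ?_, ?_, hses⟩
  · intro γ m; exact hf (e γ) m
  · intro γ m; exact hg (e γ) m


/-- Let `W₁, …, W_m` be finite groups, `V_i` a finite-dimensional `ℚ`-representation of
`W_i`, and `V = ⊕ V_i` with the componentwise action of `W = W₁ × ⋯ × W_m`.  Let `L ⊂ V`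
be a `W`-invariant lattice (realized by a `W`-lattice `LG` with an injective equivariant
map `j` into `V`).  If `L` is a quasi-permutation `W`-lattice, then for each `i` the
intersection `L_i = L ∩ V_i` (realized by a `W_i`-lattice `Li` with an injective
equivariant map `jᵢ` into `V_i` whose range is `{y : y ∈ V_i, y ∈ L}`) is a
quasi-permutation `W_i`-lattice. -/
theorem component_quasiPermutation {ι : Type u} [Fintype ι] [DecidableEq ι]
    (W : ι → Type u) [∀ i, Group (W i)] [∀ i, Fintype (W i)]
    (V : ι → Type u) [∀ i, AddCommGroup (V i)] [∀ i, Module ℚ (V i)]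
    [∀ i, FiniteDimensional ℚ (V i)] [∀ i, DistribMulAction (W i) (V i)]
    (LG : GLat (∀ i, W i)) (j : LG.carrier →+ (∀ i, V i))
    (hinj : Function.Injective j)
    (hequi : ∀ (w : ∀ i, W i) (x : LG.carrier), j (w • x) = fun i => w i • j x i)
    (i₀ : ι)
    (Li : GLat (W i₀)) (jᵢ : Li.carrier →+ V i₀)
    (hinjᵢ : Function.Injective jᵢ)
    (hequiᵢ : ∀ (g : W i₀) (y : Li.carrier), jᵢ (g • y) = g • jᵢ y)
    (hrangeᵢ : ∀ y : V i₀, (∃ z : Li.carrier, jᵢ z = y) ↔ Pi.single i₀ y ∈ Set.range j)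
    (hqp : LG.IsQuasiPermutation) :
    Li.IsQuasiPermutation := by
  classical
  let e : W i₀ →* (∀ i, W i) := MonoidHom.mulSingle W i₀
  have he_at : ∀ (γ : W i₀) (i : ι), i ≠ i₀ → e γ i = 1 := by
    intro γ i hi; exact Pi.mulSingle_eq_of_ne hi γ
  have he_self : ∀ γ : W i₀, e γ i₀ = γ := fun γ => Pi.mulSingle_eq_same i₀ γ
  -- construct the inclusion k : Li → LG
  have hex : ∀ z : Li.carrier, ∃ xx : LG.carrier, j xx = Pi.single i₀ (jᵢ z) :=
    fun z => (hrangeᵢ (jᵢ z)).mp ⟨z, rfl⟩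
  have hadd : ∀ z w : Li.carrier,
      (hex (z + w)).choose = (hex z).choose + (hex w).choose := by
    intro z w; apply hinj
    calc j ((hex (z + w)).choose) = Pi.single i₀ (jᵢ (z + w)) := (hex (z + w)).choose_spec
      _ = Pi.single i₀ (jᵢ z) + Pi.single i₀ (jᵢ w) := by rw [map_add, Pi.single_add]
      _ = j ((hex z).choose) + j ((hex w).choose) := by
            rw [(hex z).choose_spec, (hex w).choose_spec]
      _ = j ((hex z).choose + (hex w).choose) := (map_add j _ _).symm
  let k : Li.carrier →+ LG.carrier := AddMonoidHom.mk' (fun z => (hex z).choose) hadd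
  have hk : ∀ z, j (k z) = Pi.single i₀ (jᵢ z) := fun z => (hex z).choose_spec
  have hkinj : Function.Injective k := by
    intro z w h
    apply hinjᵢ
    have h2 := congrArg j h
    rw [hk, hk] at h2
    have h3 := congrFun h2 i₀
    rwa [Pi.single_eq_same, Pi.single_eq_same] at h3
  have hmem : ∀ xx : LG.carrier, (∃ z, k z = xx) ↔ ∀ i, i ≠ i₀ → j xx i = 0 := by
    intro xx
    constructor
    · rintro ⟨z, rfl⟩ i hi
      rw [hk]
      exact Pi.single_eq_of_ne hi _
    · intro h
      have hfun : j xx = Pi.single i₀ (j xx i₀) := by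
        funext i
        by_cases hi : i = i₀
        · subst hi; rw [Pi.single_eq_same]
        · rw [Pi.single_eq_of_ne hi]; exact h i hi
      obtain ⟨z, hz⟩ := (hrangeᵢ (j xx i₀)).mpr ⟨xx, hfun⟩
      refine ⟨z, hinj ?_⟩
      rw [hk, hz, ← hfun]
  have hkequi : GLat.Equivariant (L := Li) (M := GLat.restrict e LG) k := by
    intro γ z
    show k (γ • z) = e γ • k z
    apply hinj
    rw [hk, hequi]
    funext i
    by_cases hi : i = i₀
    · subst hi
      show Pi.single i (jᵢ (γ • z)) i = e γ i • j (k z) i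
      rw [Pi.single_eq_same, hequiᵢ, he_self, hk, Pi.single_eq_same]
    · show Pi.single i₀ (jᵢ (γ • z)) i = e γ i • j (k z) i
      rw [Pi.single_eq_of_ne hi, he_at γ i hi, one_smul, hk, Pi.single_eq_of_ne hi]
  have htriv : ∀ (γ : W i₀) (b : (GLat.restrict e LG).carrier),
      γ • b - b ∈ k.range := by
    intro γ b
    show ∃ z, k z = (γ • b - b : (GLat.restrict e LG).carrier)
    apply (hmem _).mpr
    intro i hi
    show j (e γ • (show LG.carrier from b) - (show LG.carrier from b)) i = 0
    rw [map_sub, hequi, Pi.sub_apply]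
    show e γ i • j b i - j b i = 0
    rw [he_at γ i hi, one_smul, sub_self]
  have htf : ∀ (n : ℤ) (b : (GLat.restrict e LG).carrier),
      n ≠ 0 → n • b ∈ k.range → b ∈ k.range := by
    intro n b hn hb
    change ∃ z, k z = n • b at hb
    show ∃ z, k z = b
    apply (hmem b).mpr
    intro i hi
    have h1 : j (n • (show LG.carrier from b)) i = 0 := (hmem _).mp hb i hi
    rw [map_zsmul, Pi.smul_apply] at h1
    have h2 : ((n : ℚ)) • (j b i) = 0 := by rw [Int.cast_smul_eq_zsmul]; exact h1
    exact (smul_eq_zero.mp h2).resolve_left (by exact_mod_cast hn)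
  exact aux_sub_quasiPerm Li (GLat.restrict e LG) k hkinj hkequi htriv htf
    (GLat.restrict_qp e LG hqp)
end
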